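/- arXiv:1512.02623 — 3 statements merged into one kernel-verified Lean document; each statement's English description precedes it below -/
import Mathlib

section
/- Let X be a complex Banach space and T a bounded linear operator on X. Then T is right generalized Drazin invertible if and only if T admits a generalized Kato decomposition GKD(M,N) and X = K(T) + H₀(T). -/
open Filter Topology Set

namespace Paper

variable {Y : Type*} [NormedAddCommGroup Y] [NormedSpace ℂ Y]

/-- A bounded operator `A` is quasinilpotent if `‖Aⁿ‖^(1/n) → 0`. -/
def IsQuasinilpotent (A : Y →L[ℂ] Y) : Prop :=
  Tendsto (fun n : ℕ => ‖A ^ n‖ ^ (1 / (n : ℝ))) atTop (nhds (0 : ℝ))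

/-- `A` is semi-regular if its range is closed and `ker (Aⁿ) ⊆ ran A` for all `n`. -/
def SemiRegular (A : Y →L[ℂ] Y) : Prop :=
  IsClosed (Set.range A) ∧ ∀ n : ℕ, ∀ x : Y, (A ^ n) x = 0 → x ∈ Set.range A

/-- `A` has the single-valued extension property at `l0`. -/
def HasSVEPAt (A : Y →L[ℂ] Y) (l0 : ℂ) : Prop :=
  ∀ U : Set ℂ, IsOpen U → l0 ∈ U → ∀ f : ℂ → Y, AnalyticOnNhd ℂ f U →
    (∀ l ∈ U, l • f l - A (f l) = 0) → ∀ l ∈ U, f l = 0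

/-- `A` has the single-valued extension property (at every point). -/
def HasSVEP (A : Y →L[ℂ] Y) : Prop := ∀ l : ℂ, HasSVEPAt A l

/-- `A` is bounded below: injective with closed range. -/
def BoundedBelow (A : Y →L[ℂ] Y) : Prop :=
  Function.Injective A ∧ IsClosed (Set.range A)

variable {X : Type*} [NormedAddCommGroup X] [NormedSpace ℂ X] [CompleteSpace X]

/-- The quasinilpotent part `H₀(T)` of `T`. -/
def quasinilpotentPart (T : X →L[ℂ] X) : Set X :=
  {x : X | Tendsto (fun n : ℕ => ‖(T ^ n) x‖ ^ (1 / (n : ℝ))) atTop (nhds (0 : ℝ))}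

/-- The analytic core `K(T)` of `T`. -/
def analyticCore (T : X →L[ℂ] X) : Set X :=
  {x : X | ∃ (u : ℕ → X) (δ : ℝ), 0 < δ ∧ T (u 1) = x ∧
    (∀ n : ℕ, 1 ≤ n → T (u (n + 1)) = u n) ∧ (∀ n : ℕ, 1 ≤ n → ‖u n‖ ≤ δ ^ n * ‖x‖)}

/-- Restriction of `T` to an invariant subspace `M`, as a continuous linear operator on `M`. -/
def restrictCLM (T : X →L[ℂ] X) (M : Submodule ℂ X) (h : ∀ x ∈ M, T x ∈ M) : M →L[ℂ] M :=
  { toLinearMap := (T : X →ₗ[ℂ] X).restrict h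
    cont := (T.continuous.comp continuous_subtype_val).subtype_mk _ }

/-- `(M, N)` is a generalized Kato decomposition of `T`. -/
structure IsGKD (T : X →L[ℂ] X) (M N : Submodule ℂ X) : Prop where
  closedM : IsClosed (M : Set X)
  closedN : IsClosed (N : Set X)
  invM : ∀ x ∈ M, T x ∈ M
  invN : ∀ x ∈ N, T x ∈ N
  compl : IsCompl M N
  semiregM : SemiRegular (restrictCLM T M invM)
  quasiN : IsQuasinilpotent (restrictCLM T N invN)

/-- `T` admits a generalized Kato decomposition. -/
def HasGKD (T : X →L[ℂ] X) : Prop := ∃ M N : Submodule ℂ X, IsGKD T M N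

/-- `T` is left generalized Drazin invertible. -/
def LeftGDInvertible (T : X →L[ℂ] X) : Prop :=
  IsClosed (quasinilpotentPart T) ∧
  ∃ M : Submodule ℂ X, IsClosed (M : Set X) ∧ (∀ x ∈ M, T x ∈ M) ∧
    IsClosed (T '' (M : Set X)) ∧
    (M : Set X) ∩ quasinilpotentPart T = {0} ∧
    (∀ x : X, ∃ m ∈ M, ∃ h ∈ quasinilpotentPart T, x = m + h)

/-- `T` is right generalized Drazin invertible. -/
def RightGDInvertible (T : X →L[ℂ] X) : Prop :=
  IsClosed (analyticCore T) ∧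
  ∃ N : Submodule ℂ X, IsClosed (N : Set X) ∧ (∀ x ∈ N, T x ∈ N) ∧
    (N : Set X) ⊆ quasinilpotentPart T ∧
    analyticCore T ∩ (N : Set X) = {0} ∧
    (∀ x : X, ∃ k ∈ analyticCore T, ∃ h ∈ N, x = k + h)

/-- The approximate point spectrum. -/
def sigmaAp (T : X →L[ℂ] X) : Set ℂ :=
  {l : ℂ | ¬ BoundedBelow (l • ContinuousLinearMap.id ℂ X - T)}

/-- The surjective spectrum. -/
def sigmaSu (T : X →L[ℂ] X) : Set ℂ :=
  {l : ℂ | ¬ Function.Surjective (l • ContinuousLinearMap.id ℂ X - T)}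

/-- The left generalized Drazin spectrum. -/
def sigmaLgD (T : X →L[ℂ] X) : Set ℂ :=
  {l : ℂ | ¬ LeftGDInvertible (l • ContinuousLinearMap.id ℂ X - T)}

/-- The right generalized Drazin spectrum. -/
def sigmaRgD (T : X →L[ℂ] X) : Set ℂ :=
  {l : ℂ | ¬ RightGDInvertible (l • ContinuousLinearMap.id ℂ X - T)}

/-- The generalized Kato spectrum. -/
def sigmaGK (T : X →L[ℂ] X) : Set ℂ :=
  {l : ℂ | ¬ HasGKD (l • ContinuousLinearMap.id ℂ X - T)}

/-- The set of points where `T` fails to have the SVEP. -/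
def svepFailSet (T : X →L[ℂ] X) : Set ℂ := {l : ℂ | ¬ HasSVEPAt T l}

/-- The adjoint `T*` of `T`, acting on the dual space, `(T* φ) x = φ (T x)`. -/
noncomputable def adjointDual (T : X →L[ℂ] X) :
    StrongDual ℂ X →L[ℂ] StrongDual ℂ X :=
  (ContinuousLinearMap.compL ℂ X X ℂ).flip T

/-- The local resolvent set of `T` at `x`. -/
def localResolvent (T : X →L[ℂ] X) (x : X) : Set ℂ :=
  ⋃₀ {U : Set ℂ | IsOpen U ∧ ∃ f : ℂ → X, AnalyticOnNhd ℂ f U ∧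
      ∀ l ∈ U, l • f l - T (f l) = x}

/-- The local spectrum of `T` at `x`. -/
def localSpectrum (T : X →L[ℂ] X) (x : X) : Set ℂ := (localResolvent T x)ᶜ

/-- The local spectral subspace `X_T(Ω)`. -/
def localSpectralSubspace (T : X →L[ℂ] X) (Ω : Set ℂ) : Set X :=
  {x : X | localSpectrum T x ⊆ Ω}

/-- Dunford's property `(C)`. -/
def HasPropertyC (T : X →L[ℂ] X) : Prop :=
  ∀ Ω : Set ℂ, IsClosed Ω → IsClosed (localSpectralSubspace T Ω)

/-- Bishop's property `(β)`. -/
def HasPropertyBeta (T : X →L[ℂ] X) : Prop :=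
  ∀ U : Set ℂ, IsOpen U → ∀ f : ℕ → ℂ → X, (∀ n, AnalyticOnNhd ℂ (f n) U) →
    (∀ K : Set ℂ, K ⊆ U → IsCompact K →
      TendstoUniformlyOn (fun n l => l • f n l - T (f n l)) (fun _ => 0) atTop K) →
    ∀ K : Set ℂ, K ⊆ U → IsCompact K →
      TendstoUniformlyOn (fun n l => f n l) (fun _ => 0) atTop K

/-- `S` is a generalized Drazin inverse of `T`. -/
def IsGDInverse (T S : X →L[ℂ] X) : Prop :=
  S * T = T * S ∧ S * T * S = S ∧ IsQuasinilpotent (T * S * T - T)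


/-! ### Auxiliary lemmas -/

section Aux

variable {X : Type*} [NormedAddCommGroup X] [NormedSpace ℂ X] [CompleteSpace X]

/-- geometric bound characterization of n-th-root tendsto 0 -/
theorem geo_iff {a : ℕ → ℝ} (ha : ∀ n, 0 ≤ a n) :
    Tendsto (fun n : ℕ => (a n) ^ (1 / (n : ℝ))) atTop (nhds (0 : ℝ)) ↔
      ∀ ε : ℝ, 0 < ε → ∀ᶠ n in atTop, a n ≤ ε ^ n := by
  constructor
  · intro h ε hε
    have h2 : ∀ᶠ n in atTop, (a n) ^ (1 / (n : ℝ)) < ε := by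
      obtain ⟨N, hN⟩ := Metric.tendsto_atTop.mp h ε hε
      refine eventually_atTop.mpr ⟨N, fun n hn => ?_⟩
      have := hN n hn
      rw [Real.dist_eq, sub_zero] at this
      calc (a n) ^ (1 / (n : ℝ)) ≤ |(a n) ^ (1 / (n : ℝ))| := le_abs_self _
        _ < ε := this
    filter_upwards [h2, eventually_ge_atTop 1] with n hn hn1
    have hn0 : (0:ℝ) < (n:ℝ) := by exact_mod_cast hn1
    have key : a n = ((a n) ^ (1 / (n:ℝ))) ^ (n : ℕ) := by
      rw [← Real.rpow_natCast ((a n) ^ (1 / (n:ℝ))) n, ← Real.rpow_mul (ha n),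
        one_div, inv_mul_cancel₀ (ne_of_gt hn0), Real.rpow_one]
    rw [key]
    exact pow_le_pow_left₀ (Real.rpow_nonneg (ha n) _) hn.le n
  · intro h
    rw [Metric.tendsto_atTop]
    intro ε hε
    obtain ⟨N, hN⟩ := eventually_atTop.mp (h (min (ε/2) (1/2)) (by positivity))
    refine ⟨max N 1, fun n hn => ?_⟩
    have hn1 : 1 ≤ n := le_trans (le_max_right _ _) hn
    have hnN : N ≤ n := le_trans (le_max_left _ _) hn
    have hn0 : (0:ℝ) < (n:ℝ) := by exact_mod_cast hn1
    have hb : a n ≤ (min (ε/2) (1/2)) ^ n := hN n hnN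
    have hmpos : (0:ℝ) ≤ min (ε/2) (1/2) := by positivity
    have hle : (a n) ^ (1 / (n:ℝ)) ≤ ((min (ε/2) (1/2)) ^ n) ^ (1 / (n:ℝ)) :=
      Real.rpow_le_rpow (ha n) hb (by positivity)
    have heq : ((min (ε/2) (1/2)) ^ n : ℝ) ^ (1 / (n:ℝ)) = min (ε/2) (1/2) := by
      rw [← Real.rpow_natCast (min (ε/2) (1/2)) n, ← Real.rpow_mul hmpos,
        mul_one_div, div_self (ne_of_gt hn0), Real.rpow_one]
    rw [Real.dist_eq, sub_zero, abs_of_nonneg (Real.rpow_nonneg (ha n) _)]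
    calc (a n) ^ (1 / (n:ℝ)) ≤ min (ε/2) (1/2) := by rw [heq] at hle; exact hle
      _ ≤ ε/2 := min_le_left _ _
      _ < ε := by linarith

/-- a quasinilpotent operator is pointwise quasinilpotent -/
theorem IsQuasinilpotent.pointwise {Y : Type*} [NormedAddCommGroup Y] [NormedSpace ℂ Y]
    {A : Y →L[ℂ] Y} (h : IsQuasinilpotent A) (x : Y) :
    Tendsto (fun n : ℕ => ‖(A ^ n) x‖ ^ (1 / (n : ℝ))) atTop (nhds (0 : ℝ)) := by
  rw [geo_iff (fun n => norm_nonneg _)]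
  intro ε hε
  set C : ℝ := max 1 ‖x‖ with hC
  have hC1 : (1:ℝ) ≤ C := le_max_left _ _
  have hC0 : (0:ℝ) < C := lt_of_lt_of_le one_pos hC1
  have h2 := (geo_iff (fun n => norm_nonneg (A ^ n))).mp h (ε / C) (by positivity)
  filter_upwards [h2, eventually_ge_atTop 1] with n hn hn1
  calc ‖(A ^ n) x‖ ≤ ‖A ^ n‖ * ‖x‖ := (A ^ n).le_opNorm x
    _ ≤ (ε / C) ^ n * C := by
        refine mul_le_mul hn (le_max_right _ _) (norm_nonneg _) (by positivity)
    _ ≤ (ε / C) ^ n * C ^ n := by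
        refine mul_le_mul_of_nonneg_left ?_ (by positivity)
        exact le_self_pow₀ hC1 (by omega)
    _ = ε ^ n := by
        rw [div_pow, div_mul_eq_mul_div, mul_div_assoc, div_self (by positivity), mul_one]

end Aux
section Aux2

variable {X : Type*} [NormedAddCommGroup X] [NormedSpace ℂ X] [CompleteSpace X]

/-- pointwise quasinilpotent implies quasinilpotent, on a Banach space -/
theorem isQuasinilpotent_of_pointwise {A : X →L[ℂ] X}
    (h : ∀ x : X, Tendsto (fun n : ℕ => ‖(A ^ n) x‖ ^ (1 / (n : ℝ))) atTop (nhds (0 : ℝ))) :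
    IsQuasinilpotent A := by
  rw [IsQuasinilpotent, geo_iff (fun n => norm_nonneg _)]
  intro ε hε
  -- consider the rescaled family (2/ε)^n • A^n
  set g : ℕ → X →L[ℂ] X := fun n => ((2/ε) ^ n : ℝ) • (A ^ n) with hg
  have hpt : ∀ x, ∃ C, ∀ n, ‖g n x‖ ≤ C := by
    intro x
    have h2 := (geo_iff (fun n => norm_nonneg ((A ^ n) x))).mp (h x) (ε/2) (by positivity)
    obtain ⟨N, hN⟩ := eventually_atTop.mp h2
    refine ⟨1 + ∑ k ∈ Finset.range N, ‖g k x‖, fun n => ?_⟩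
    rcases lt_or_ge n N with hn | hn
    · have hmem : n ∈ Finset.range N := Finset.mem_range.mpr hn
      have : ‖g n x‖ ≤ ∑ k ∈ Finset.range N, ‖g k x‖ :=
        Finset.single_le_sum (f := fun k => ‖g k x‖) (fun k _ => norm_nonneg _) hmem
      linarith
    · have hb := hN n hn
      have : ‖g n x‖ ≤ 1 := by
        rw [hg]
        simp only [ContinuousLinearMap.coe_smul', Pi.smul_apply, norm_smul]
        rw [Real.norm_eq_abs, abs_of_nonneg (by positivity)]
        calc (2/ε) ^ n * ‖(A ^ n) x‖ ≤ (2/ε) ^ n * (ε/2) ^ n :=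
              mul_le_mul_of_nonneg_left hb (by positivity)
          _ = 1 := by
              rw [← mul_pow, div_mul_div_comm, mul_comm, div_self (by positivity), one_pow]
      have hpos : (0:ℝ) ≤ ∑ k ∈ Finset.range N, ‖g k x‖ :=
        Finset.sum_nonneg (fun k _ => norm_nonneg _)
      linarith
  obtain ⟨C, hC⟩ := banach_steinhaus hpt
  have hC0 : (0:ℝ) ≤ C := le_trans (norm_nonneg (g 0)) (hC 0)
  obtain ⟨N, hN⟩ := pow_unbounded_of_one_lt C (show (1:ℝ) < 2 by norm_num)
  filter_upwards [eventually_ge_atTop N] with n hn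
  have hgn : ‖g n‖ = (2/ε) ^ n * ‖A ^ n‖ := by
    show ‖(2/ε) ^ n • (A ^ n)‖ = _
    rw [norm_smul ((2/ε) ^ n : ℝ) (A ^ n), Real.norm_eq_abs, abs_of_nonneg (show (0:ℝ) ≤ (2/ε)^n by positivity)]
  have h1 : (2/ε) ^ n * ‖A ^ n‖ ≤ C := hgn ▸ hC n
  have h2 : C ≤ 2 ^ n := le_trans hN.le (pow_le_pow_right₀ one_le_two hn)
  have hpow : (0:ℝ) < (2/ε) ^ n := by positivity
  rw [← le_div_iff₀' hpow] at h1
  calc ‖A ^ n‖ ≤ C / (2/ε) ^ n := h1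
    _ ≤ 2 ^ n / (2/ε) ^ n := by gcongr
    _ = ε ^ n := by
        rw [← div_pow]
        congr 1
        field_simp

end Aux2
section Aux3

variable {X : Type*} [NormedAddCommGroup X] [NormedSpace ℂ X] [CompleteSpace X]

theorem restrictCLM_coe (T : X →L[ℂ] X) (M : Submodule ℂ X) (h : ∀ x ∈ M, T x ∈ M) (x : M) :
    (restrictCLM T M h x : X) = T (x : X) := rfl

theorem restrictCLM_pow_coe (T : X →L[ℂ] X) (M : Submodule ℂ X) (h : ∀ x ∈ M, T x ∈ M)
    (n : ℕ) (x : M) : (((restrictCLM T M h) ^ n) x : X) = (T ^ n) (x : X) := by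
  induction n generalizing x with
  | zero => simp
  | succ n ih =>
    rw [pow_succ, pow_succ, ContinuousLinearMap.mul_apply, ContinuousLinearMap.mul_apply,
      ih (restrictCLM T M h x), restrictCLM_coe]

theorem mem_quasinilpotentPart_iff (T : X →L[ℂ] X) (M : Submodule ℂ X)
    (h : ∀ x ∈ M, T x ∈ M) (x : M) :
    (x : X) ∈ quasinilpotentPart T ↔
      Tendsto (fun n : ℕ => ‖((restrictCLM T M h ^ n) x : M)‖ ^ (1 / (n : ℝ)))
        atTop (nhds (0 : ℝ)) := by
  unfold quasinilpotentPart
  rw [Set.mem_setOf_eq]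
  constructor <;> intro hx <;> [skip; skip] <;>
    · convert hx using 3 with n
      rw [Submodule.coe_norm, restrictCLM_pow_coe]

/-- restriction of `T` to a closed invariant subspace of `H₀(T)` is quasinilpotent -/
theorem isQuasinilpotent_restrict (T : X →L[ℂ] X) (N : Submodule ℂ X)
    (hcl : IsClosed (N : Set X)) (hinv : ∀ x ∈ N, T x ∈ N)
    (hsub : (N : Set X) ⊆ quasinilpotentPart T) :
    IsQuasinilpotent (restrictCLM T N hinv) := by
  haveI : CompleteSpace N := hcl.completeSpace_coe
  apply isQuasinilpotent_of_pointwise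
  intro x
  have := (mem_quasinilpotentPart_iff T N hinv x).mp (hsub x.2)
  exact this

/-- conversely, if the restriction is quasinilpotent then `N ⊆ H₀(T)` -/
theorem subset_quasinilpotentPart (T : X →L[ℂ] X) (N : Submodule ℂ X)
    (hinv : ∀ x ∈ N, T x ∈ N)
    (hq : IsQuasinilpotent (restrictCLM T N hinv)) :
    (N : Set X) ⊆ quasinilpotentPart T := by
  intro x hx
  rw [show x = ((⟨x, hx⟩ : N) : X) from rfl, mem_quasinilpotentPart_iff T N hinv]
  exact hq.pointwise _

end Aux3
section Aux4

variable {X : Type*} [NormedAddCommGroup X] [NormedSpace ℂ X] [CompleteSpace X]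

theorem zero_mem_analyticCore (T : X →L[ℂ] X) : (0 : X) ∈ analyticCore T := by
  refine ⟨fun _ => 0, 1, one_pos, by simp, fun n _ => by simp, fun n _ => by simp⟩

theorem bound_adjust {d B nx : ℝ} (hd : 1 ≤ d) (hB : 0 ≤ B) (hx : 0 < nx) :
    ∃ c : ℝ, 0 < c ∧ ∀ n : ℕ, 1 ≤ n → d ^ n * B ≤ c ^ n * nx := by
  set M : ℝ := max 1 (B / nx) with hM
  have hM1 : (1:ℝ) ≤ M := le_max_left _ _
  refine ⟨d * M, by positivity, fun n hn => ?_⟩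
  have h1 : B / nx ≤ M := le_max_right _ _
  have h2 : M ≤ M ^ n := le_self_pow₀ hM1 (by omega)
  have hd0 : (0:ℝ) < d := lt_of_lt_of_le one_pos hd
  calc d ^ n * B = d ^ n * ((B / nx) * nx) := by rw [div_mul_cancel₀ _ (ne_of_gt hx)]
    _ ≤ d ^ n * (M * nx) := by
        refine mul_le_mul_of_nonneg_left (mul_le_mul_of_nonneg_right h1 hx.le) (by positivity)
    _ ≤ d ^ n * (M ^ n * nx) := by
        refine mul_le_mul_of_nonneg_left (mul_le_mul_of_nonneg_right h2 hx.le) (by positivity)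
    _ = (d * M) ^ n * nx := by rw [mul_pow]; ring

theorem add_mem_analyticCore (T : X →L[ℂ] X) {x y : X}
    (hx : x ∈ analyticCore T) (hy : y ∈ analyticCore T) : x + y ∈ analyticCore T := by
  rcases eq_or_ne (x + y) 0 with h0 | h0
  · rw [h0]; exact zero_mem_analyticCore T
  obtain ⟨u, δ1, hδ1, hu1, hurec, hub⟩ := hx
  obtain ⟨v, δ2, hδ2, hv1, hvrec, hvb⟩ := hy
  set d : ℝ := max 1 (max δ1 δ2) with hd
  have hd1 : (1:ℝ) ≤ d := le_max_left _ _
  obtain ⟨c, hc, hcb⟩ := bound_adjust (B := ‖x‖ + ‖y‖) (nx := ‖x + y‖) hd1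
    (by positivity) (norm_pos_iff.mpr h0)
  refine ⟨fun n => u n + v n, c, hc, by rw [map_add, hu1, hv1], fun n hn => by
    rw [map_add, hurec n hn, hvrec n hn], fun n hn => ?_⟩
  have hb1 : δ1 ^ n ≤ d ^ n :=
    pow_le_pow_left₀ hδ1.le (le_trans (le_max_left _ _) (le_max_right _ _)) n
  have hb2 : δ2 ^ n ≤ d ^ n :=
    pow_le_pow_left₀ hδ2.le (le_trans (le_max_right _ _) (le_max_right _ _)) n
  calc ‖u n + v n‖ ≤ ‖u n‖ + ‖v n‖ := norm_add_le _ _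
    _ ≤ δ1 ^ n * ‖x‖ + δ2 ^ n * ‖y‖ := add_le_add (hub n hn) (hvb n hn)
    _ ≤ d ^ n * ‖x‖ + d ^ n * ‖y‖ := add_le_add
        (mul_le_mul_of_nonneg_right hb1 (norm_nonneg _))
        (mul_le_mul_of_nonneg_right hb2 (norm_nonneg _))
    _ = d ^ n * (‖x‖ + ‖y‖) := by ring
    _ ≤ c ^ n * ‖x + y‖ := hcb n hn

theorem smul_mem_analyticCore (T : X →L[ℂ] X) (a : ℂ) {x : X}
    (hx : x ∈ analyticCore T) : a • x ∈ analyticCore T := by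
  rcases eq_or_ne a 0 with rfl | ha
  · rw [zero_smul]; exact zero_mem_analyticCore T
  obtain ⟨u, δ, hδ, hu1, hurec, hub⟩ := hx
  refine ⟨fun n => a • u n, δ, hδ, by rw [map_smul, hu1], fun n hn => by
    rw [map_smul, hurec n hn], fun n hn => ?_⟩
  rw [norm_smul, norm_smul]
  calc ‖a‖ * ‖u n‖ ≤ ‖a‖ * (δ ^ n * ‖x‖) :=
        mul_le_mul_of_nonneg_left (hub n hn) (norm_nonneg _)
    _ = δ ^ n * (‖a‖ * ‖x‖) := by ring

/-- the analytic core as a submodule -/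
def coreSubmodule (T : X →L[ℂ] X) : Submodule ℂ X where
  carrier := analyticCore T
  add_mem' := add_mem_analyticCore T
  zero_mem' := zero_mem_analyticCore T
  smul_mem' := smul_mem_analyticCore T

theorem coreSubmodule_coe (T : X →L[ℂ] X) : (coreSubmodule T : Set X) = analyticCore T := rfl

theorem analyticCore_TInvariant (T : X →L[ℂ] X) {x : X} (hx : x ∈ analyticCore T) :
    T x ∈ analyticCore T := by
  rcases eq_or_ne (T x) 0 with h0 | h0
  · rw [h0]; exact zero_mem_analyticCore T
  obtain ⟨u, δ, hδ, hu1, hurec, hub⟩ := hx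
  set d : ℝ := max 1 δ with hd
  have hd1 : (1:ℝ) ≤ d := le_max_left _ _
  obtain ⟨c, hc, hcb⟩ := bound_adjust (B := ‖x‖) (nx := ‖T x‖) hd1
    (norm_nonneg _) (norm_pos_iff.mpr h0)
  refine ⟨fun n => match n with | 0 => x | 1 => x | (m+2) => u (m+1), c, hc, rfl,
    fun n hn => ?_, fun n hn => ?_⟩
  · match n, hn with
    | 1, _ => exact hu1
    | (m+2), _ => exact hurec (m+1) (by omega)
  · refine le_trans ?_ (hcb n hn)
    match n, hn with
    | 1, _ =>
      show ‖x‖ ≤ d ^ 1 * ‖x‖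
      nlinarith [norm_nonneg x]
    | (m+2), _ =>
      show ‖u (m+1)‖ ≤ d ^ (m+2) * ‖x‖
      calc ‖u (m+1)‖ ≤ δ ^ (m+1) * ‖x‖ := hub (m+1) (by omega)
        _ ≤ d ^ (m+2) * ‖x‖ := by
            refine mul_le_mul_of_nonneg_right ?_ (norm_nonneg _)
            calc δ ^ (m+1) ≤ d ^ (m+1) := pow_le_pow_left₀ hδ.le (le_max_right _ _) _
              _ ≤ d ^ (m+2) := pow_le_pow_right₀ hd1 (by omega)

theorem analyticCore_surj (T : X →L[ℂ] X) {x : X} (hx : x ∈ analyticCore T) :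
    ∃ y ∈ analyticCore T, T y = x := by
  obtain ⟨u, δ, hδ, hu1, hurec, hub⟩ := hx
  rcases eq_or_ne (u 1) 0 with h0 | h0
  · refine ⟨0, zero_mem_analyticCore T, by rw [map_zero, ← hu1, h0, map_zero]⟩
  set d : ℝ := max 1 δ with hd
  have hd1 : (1:ℝ) ≤ d := le_max_left _ _
  have hδd : δ ≤ d := le_max_right _ _
  obtain ⟨c, hc, hcb⟩ := bound_adjust (B := d * ‖x‖) (nx := ‖u 1‖) hd1
    (by positivity) (norm_pos_iff.mpr h0)
  refine ⟨u 1, ⟨fun n => u (n + 1), c, hc, hurec 1 le_rfl, fun n hn => hurec (n+1) (by omega),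
    fun n hn => ?_⟩, hu1⟩
  refine le_trans ?_ (hcb n hn)
  calc ‖u (n+1)‖ ≤ δ ^ (n+1) * ‖x‖ := hub (n+1) (by omega)
    _ ≤ d ^ (n+1) * ‖x‖ := by
        refine mul_le_mul_of_nonneg_right (pow_le_pow_left₀ hδ.le hδd _) (norm_nonneg _)
    _ = d ^ n * (d * ‖x‖) := by ring

end Aux4
section Aux5

variable {X : Type*} [NormedAddCommGroup X] [NormedSpace ℂ X] [CompleteSpace X]

theorem forward_dir (T : X →L[ℂ] X) (h : RightGDInvertible T) :
    HasGKD T ∧ ∀ x : X, ∃ k ∈ analyticCore T, ∃ h ∈ quasinilpotentPart T, x = k + h := by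
  obtain ⟨hKcl, N, hNcl, hNinv, hNH0, hint, hdec⟩ := h
  have hinvM : ∀ x ∈ coreSubmodule T, T x ∈ coreSubmodule T :=
    fun x hx => analyticCore_TInvariant T hx
  refine ⟨⟨coreSubmodule T, N, ?_⟩, fun x => ?_⟩
  · refine ⟨hKcl, hNcl, hinvM, hNinv, ?_, ?_, isQuasinilpotent_restrict T N hNcl hNinv hNH0⟩
    · -- IsCompl
      constructor
      · rw [Submodule.disjoint_def]
        intro x hxM hxN
        have hx : x ∈ analyticCore T ∩ (N : Set X) := ⟨hxM, hxN⟩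
        rw [hint] at hx
        exact hx
      · rw [codisjoint_iff, eq_top_iff]
        intro x _
        obtain ⟨k, hk, h', hh', heq⟩ := hdec x
        exact Submodule.mem_sup.mpr ⟨k, hk, h', hh', heq.symm⟩
    · -- SemiRegular of restriction to the core
      have hsurj : Function.Surjective (restrictCLM T (coreSubmodule T) hinvM) := by
        rintro ⟨z, hz⟩
        obtain ⟨y, hy, hTy⟩ := analyticCore_surj T hz
        exact ⟨⟨y, hy⟩, Subtype.ext hTy⟩
      constructor
      · rw [Set.range_eq_univ.mpr hsurj]
        exact isClosed_univ
      · intro n z _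
        rw [Set.range_eq_univ.mpr hsurj]
        trivial
  · obtain ⟨k, hk, h', hh', heq⟩ := hdec x
    exact ⟨k, hk, h', hNH0 hh', heq⟩

end Aux5
section Aux6

variable {W : Type*} [NormedAddCommGroup W] [NormedSpace ℂ W] [CompleteSpace W]
variable {S : W →L[ℂ] W}

/-- kernels of powers are contained in ranges of all powers, for semi-regular operators -/
theorem ker_pow_mem_range_pow (hsr : SemiRegular S) :
    ∀ (m n : ℕ) (y : W), (S ^ n) y = 0 → ∃ z, (S ^ m) z = y := by
  intro m
  induction m with
  | zero => intro n y _; exact ⟨y, by simp⟩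
  | succ m ih =>
    intro n y hy
    obtain ⟨z, hz⟩ := ih n y hy
    have hz2 : (S ^ (n + m)) z = 0 := by
      rw [pow_add, ContinuousLinearMap.mul_apply, hz, hy]
    obtain ⟨w, hw⟩ := hsr.2 (n + m) z hz2
    exact ⟨w, by rw [pow_succ, ContinuousLinearMap.mul_apply, hw, hz]⟩

/-- open mapping constant for a semi-regular operator -/
theorem semireg_const (hsr : SemiRegular S) :
    ∃ c : ℝ, 1 ≤ c ∧ ∀ y ∈ Set.range S, ∃ x, S x = y ∧ ‖x‖ ≤ c * ‖y‖ := by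
  set R : Submodule ℂ W := LinearMap.range (S : W →ₗ[ℂ] W) with hR
  have hRcl : IsClosed (R : Set W) := by
    have : (R : Set W) = Set.range S := by
      ext z; simp [hR, LinearMap.mem_range]
    rw [this]; exact hsr.1
  haveI : CompleteSpace R := hRcl.completeSpace_coe
  set S' : W →L[ℂ] R := S.codRestrict R (fun x => LinearMap.mem_range_self _ x) with hS'
  have hsurj : Function.Surjective S' := by
    rintro ⟨y, hy⟩
    obtain ⟨x, hx⟩ := hy
    exact ⟨x, Subtype.ext hx⟩
  obtain ⟨C, hC0, hC⟩ := S'.exists_preimage_norm_le hsurj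
  refine ⟨max C 1, le_max_right _ _, fun y hy => ?_⟩
  have hyR : y ∈ R := by simpa [hR, LinearMap.mem_range] using hy
  obtain ⟨x, hx1, hx2⟩ := hC ⟨y, hyR⟩
  refine ⟨x, congrArg Subtype.val hx1, ?_⟩
  refine le_trans hx2 ?_
  have hnorm : ‖(⟨y, hyR⟩ : R)‖ = ‖y‖ := rfl
  rw [hnorm]
  exact mul_le_mul_of_nonneg_right (le_max_left _ _) (norm_nonneg _)

/-- any preimage of an element of a deeper range lies in the next range -/
theorem any_preimage_mem (hsr : SemiRegular S) (n : ℕ) (y p : W)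
    (hy : ∃ v, (S ^ (n + 1)) v = y) (hp : S p = y) : ∃ q, (S ^ n) q = p := by
  obtain ⟨v, hv⟩ := hy
  have hker : S (p - (S ^ n) v) = 0 := by
    rw [map_sub, hp, ← hv, pow_succ', ContinuousLinearMap.mul_apply, sub_self]
  obtain ⟨q, hq⟩ := ker_pow_mem_range_pow hsr n 1 _ (by rw [pow_one]; exact hker)
  exact ⟨v + q, by rw [map_add, hq]; abel⟩

/-- bounded preimages for powers -/
theorem bounded_preimage_pow (hsr : SemiRegular S) {c : ℝ} (hc1 : 1 ≤ c)
    (hc : ∀ y ∈ Set.range S, ∃ x, S x = y ∧ ‖x‖ ≤ c * ‖y‖) :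
    ∀ (n : ℕ) (y : W), (∃ v, (S ^ n) v = y) → ∃ p, (S ^ n) p = y ∧ ‖p‖ ≤ c ^ n * ‖y‖ := by
  intro n
  induction n with
  | zero => intro y _; exact ⟨y, by simp, by simp⟩
  | succ n ih =>
    intro y hy
    have hy1 : y ∈ Set.range S := by
      obtain ⟨v, hv⟩ := hy
      exact ⟨(S ^ n) v, by rw [← hv, pow_succ', ContinuousLinearMap.mul_apply]⟩
    obtain ⟨p1, hp1, hp1n⟩ := hc y hy1
    obtain ⟨q, hq⟩ := any_preimage_mem hsr n y p1 hy hp1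
    obtain ⟨p, hp, hpn⟩ := ih p1 ⟨q, hq⟩
    refine ⟨p, by rw [pow_succ', ContinuousLinearMap.mul_apply, hp, hp1], ?_⟩
    have hc0 : (0:ℝ) ≤ c := le_trans zero_le_one hc1
    calc ‖p‖ ≤ c ^ n * ‖p1‖ := hpn
      _ ≤ c ^ n * (c * ‖y‖) := mul_le_mul_of_nonneg_left hp1n (by positivity)
      _ = c ^ (n + 1) * ‖y‖ := by ring

/-- the range of each power of a semi-regular operator is closed -/
theorem closed_range_pow (hsr : SemiRegular S) (n : ℕ) :
    IsClosed {y : W | ∃ v, (S ^ n) v = y} := by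
  obtain ⟨c, hc1, hc⟩ := semireg_const hsr
  have hc0 : (0:ℝ) < c := lt_of_lt_of_le one_pos hc1
  refine isClosed_of_closure_subset fun y hy => ?_
  have H : ∀ j : ℕ, ∃ z, (∃ v, (S ^ n) v = z) ∧ ‖y - z‖ < (1/2 : ℝ)^j := by
    intro j
    obtain ⟨b, hb, hd⟩ := Metric.mem_closure_iff.mp hy ((1/2 : ℝ)^j) (by positivity)
    exact ⟨b, hb, by rwa [dist_eq_norm] at hd⟩
  choose g hg hgn using H
  set d : ℕ → W := fun j => g (j+1) - g j with hdd
  have hdmem : ∀ j, ∃ v, (S ^ n) v = d j := by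
    intro j
    obtain ⟨v1, hv1⟩ := hg (j+1)
    obtain ⟨v0, hv0⟩ := hg j
    exact ⟨v1 - v0, by rw [map_sub, hv1, hv0]⟩
  have hdn : ∀ j, ‖d j‖ ≤ 2 * (1/2 : ℝ)^j := by
    intro j
    have : d j = (g (j+1) - y) + (y - g j) := by rw [hdd]; abel
    rw [this]
    have h1 : ‖g (j+1) - y‖ < (1/2 : ℝ)^(j+1) := by rw [norm_sub_rev]; exact hgn (j+1)
    have h2 : ‖y - g j‖ < (1/2 : ℝ)^j := hgn j
    have h3 : ((1:ℝ)/2)^(j+1) ≤ (1/2 : ℝ)^j := by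
      rw [pow_succ]
      nlinarith [pow_pos (show (0:ℝ) < 1/2 by norm_num) j]
    calc ‖(g (j+1) - y) + (y - g j)‖ ≤ ‖g (j+1) - y‖ + ‖y - g j‖ := norm_add_le _ _
      _ ≤ 2 * (1/2 : ℝ)^j := by linarith
  have hp := fun j => bounded_preimage_pow hsr hc1 hc n (d j) (hdmem j)
  choose p hp1 hp2 using hp
  have hsum : Summable p := by
    refine Summable.of_norm_bounded (g := fun j => (c^n * 2) * (1/2 : ℝ)^j) ?_ ?_
    · exact (summable_geometric_of_lt_one (by norm_num) (by norm_num)).mul_left _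
    · intro j
      calc ‖p j‖ ≤ c^n * ‖d j‖ := hp2 j
        _ ≤ c^n * (2 * (1/2 : ℝ)^j) := mul_le_mul_of_nonneg_left (hdn j) (by positivity)
        _ = (c^n * 2) * (1/2 : ℝ)^j := by ring
  obtain ⟨p0, hp0⟩ := hg 0
  have hmap : HasSum (fun j => (S ^ n) (p j)) ((S ^ n) (∑' j, p j)) :=
    hsum.hasSum.mapL (S ^ n)
  have hfun : (fun j => (S ^ n) (p j)) = d := funext hp1
  rw [hfun] at hmap
  have hgm : Tendsto g atTop (nhds y) := by
    have h1 : Tendsto (fun m : ℕ => ‖g m - y‖) atTop (nhds 0) := by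
      refine squeeze_zero (g := fun m => (1/2 : ℝ)^m) (fun m => norm_nonneg _)
        (fun m => le_of_lt (by rw [norm_sub_rev]; exact hgn m)) ?_
      exact tendsto_pow_atTop_nhds_zero_of_lt_one (by norm_num) (by norm_num)
    rwa [← tendsto_iff_norm_sub_tendsto_zero] at h1
  have hpart : Tendsto (fun m => ∑ i ∈ Finset.range m, d i) atTop (nhds (y - g 0)) := by
    have heq : (fun m => ∑ i ∈ Finset.range m, d i) = fun m => g m - g 0 :=
      funext fun m => Finset.sum_range_sub g m
    rw [heq]
    exact hgm.sub_const (g 0)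
  have hval : (S ^ n) (∑' j, p j) = y - g 0 := by
    have h2 := (hmap.summable.hasSum_iff_tendsto_nat).mp hmap
    exact tendsto_nhds_unique h2 hpart
  exact ⟨p0 + ∑' j, p j, by rw [map_add, hp0, hval]; abel⟩
end Aux6
section Aux7

variable {W : Type*} [NormedAddCommGroup W] [NormedSpace ℂ W] [CompleteSpace W]
variable {S : W →L[ℂ] W}

/-- distance to kernels of powers is controlled by `‖Sⁿy‖`, for semi-regular operators -/
theorem kerdist (hsr : SemiRegular S) {c : ℝ} (hc1 : 1 ≤ c)
    (hc : ∀ y ∈ Set.range S, ∃ x, S x = y ∧ ‖x‖ ≤ c * ‖y‖) :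
    ∀ (n : ℕ) (y : W), ∃ k, (S ^ n) k = 0 ∧ ‖y - k‖ ≤ c ^ n * ‖(S ^ n) y‖ := by
  have base : ∀ y : W, ∃ k, S k = 0 ∧ ‖y - k‖ ≤ c * ‖S y‖ := by
    intro y
    obtain ⟨x, hx1, hx2⟩ := hc (S y) ⟨y, rfl⟩
    refine ⟨y - x, by rw [map_sub, hx1, sub_self], ?_⟩
    rw [sub_sub_cancel]
    exact hx2
  intro n
  induction n with
  | zero => intro y; exact ⟨0, by simp, by simp⟩
  | succ n ih =>
    intro y
    obtain ⟨k, hk0, hkb⟩ := ih (S y)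
    obtain ⟨w, hw⟩ := hsr.2 n k hk0
    obtain ⟨k', hk'0, hk'b⟩ := base (y - w)
    refine ⟨w + k', ?_, ?_⟩
    · rw [map_add, pow_succ]
      simp only [ContinuousLinearMap.mul_apply]
      rw [hw, hk0, hk'0, map_zero, add_zero]
    · have heq : y - (w + k') = (y - w) - k' := by abel
      rw [heq]
      have h2 : ‖S (y - w)‖ = ‖S y - k‖ := by rw [map_sub, hw]
      have h3 : ‖(S ^ n) (S y)‖ = ‖(S ^ (n+1)) y‖ := by
        rw [pow_succ, ContinuousLinearMap.mul_apply]
      calc ‖(y - w) - k'‖ ≤ c * ‖S (y - w)‖ := hk'b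
        _ = c * ‖S y - k‖ := by rw [h2]
        _ ≤ c * (c ^ n * ‖(S ^ n) (S y)‖) := by
            refine mul_le_mul_of_nonneg_left ?_ (by positivity)
            rwa [h3] at hkb
        _ = c ^ (n+1) * ‖(S ^ (n+1)) y‖ := by rw [← h3]; ring

/-- elements with backward orbits through all ranges have geometric backward orbits -/
theorem sinf_orbit (hsr : SemiRegular S) {c : ℝ} (hc1 : 1 ≤ c)
    (hc : ∀ y ∈ Set.range S, ∃ x, S x = y ∧ ‖x‖ ≤ c * ‖y‖) (y : W)
    (hy : ∀ n : ℕ, ∃ z, (S ^ n) z = y) :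
    ∃ u : ℕ → W, u 0 = y ∧ (∀ j, S (u (j + 1)) = u j) ∧ ∀ j, ‖u j‖ ≤ c ^ j * ‖y‖ := by
  -- one controlled backward step staying in the infinite range
  have step : ∀ z : {w : W // ∀ n : ℕ, ∃ v, (S ^ n) v = w},
      ∃ w : {w : W // ∀ n : ℕ, ∃ v, (S ^ n) v = w}, S (w : W) = (z : W) ∧ ‖(w : W)‖ ≤ c * ‖(z : W)‖ := by
    rintro ⟨z, hz⟩
    have hz1 : z ∈ Set.range S := by
      obtain ⟨v, hv⟩ := hz 1
      exact ⟨v, by rw [← pow_one S]; exact hv⟩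
    obtain ⟨w, hw1, hw2⟩ := hc z hz1
    refine ⟨⟨w, fun n => any_preimage_mem hsr n z w (hz (n+1)) hw1⟩, hw1, hw2⟩
  choose F hF1 hF2 using step
  set u' : ℕ → {w : W // ∀ n : ℕ, ∃ v, (S ^ n) v = w} := fun j => F^[j] ⟨y, hy⟩ with hu'
  refine ⟨fun j => (u' j : W), rfl, fun j => ?_, fun j => ?_⟩
  · show S (u' (j+1) : W) = (u' j : W)
    have h5 : u' (j + 1) = F (u' j) := Function.iterate_succ_apply' F j _
    rw [h5]
    exact hF1 (u' j)
  · show ‖(u' j : W)‖ ≤ c ^ j * ‖y‖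
    induction j with
    | zero => simp only [pow_zero, one_mul]; exact le_of_eq rfl
    | succ j ih =>
      have hstep : u' (j + 1) = F (u' j) := Function.iterate_succ_apply' F j _
      have hc0 : (0:ℝ) < c := lt_of_lt_of_le one_pos hc1
      calc ‖(u' (j+1) : W)‖ = ‖(F (u' j) : W)‖ := by rw [hstep]
        _ ≤ c * ‖(u' j : W)‖ := hF2 (u' j)
        _ ≤ c * (c ^ j * ‖y‖) := mul_le_mul_of_nonneg_left ih hc0.le
        _ = c ^ (j+1) * ‖y‖ := by ring

theorem sinf_closed (hsr : SemiRegular S) :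
    IsClosed {y : W | ∀ n : ℕ, ∃ z, (S ^ n) z = y} := by
  have : {y : W | ∀ n : ℕ, ∃ z, (S ^ n) z = y} = ⋂ n : ℕ, {y : W | ∃ z, (S ^ n) z = y} := by
    ext y; simp
  rw [this]
  exact isClosed_iInter (fun n => closed_range_pow hsr n)

end Aux7
section Aux8

variable {X : Type*} [NormedAddCommGroup X] [NormedSpace ℂ X] [CompleteSpace X]

theorem core_subset_M (T : X →L[ℂ] X) {M N : Submodule ℂ X} (gkd : IsGKD T M N) :
    analyticCore T ⊆ (M : Set X) := by
  intro x hx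
  obtain ⟨u, δ, hδ, hu1, hurec, hub⟩ := hx
  set SN := restrictCLM T N gkd.invN with hSN
  set πN : X →L[ℂ] N := N.linearProjOfClosedCompl M gkd.compl.symm gkd.closedN gkd.closedM
    with hπN
  have hπN_coe : ⇑πN = N.linearProjOfIsCompl M gkd.compl.symm :=
    Submodule.coe_continuous_linearProjOfClosedCompl' gkd.compl.symm gkd.closedN gkd.closedM
  -- πN commutes with T
  have hcomm : ∀ z : X, (πN (T z) : X) = T ((πN z : N) : X) := by
    intro z
    have hz : ((M.linearProjOfIsCompl N gkd.compl z : M) : X) +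
        (N.linearProjOfIsCompl M gkd.compl.symm z : N) = z :=
      Submodule.projection_add_projection_eq_self gkd.compl z
    set m := M.linearProjOfIsCompl N gkd.compl z with hm
    set nn := N.linearProjOfIsCompl M gkd.compl.symm z with hnn
    have hTz : T z = T ↑m + T ↑nn := by rw [← map_add, hz]
    have h1 : N.linearProjOfIsCompl M gkd.compl.symm (T ↑m) = 0 :=
      Submodule.projectionOnto_apply_of_mem_right gkd.compl.symm (gkd.invM _ m.2)
    have h2 : N.linearProjOfIsCompl M gkd.compl.symm (T ↑nn) =
        ⟨T ↑nn, gkd.invN _ nn.2⟩ :=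
      Submodule.linearProjOfIsCompl_apply_left gkd.compl.symm ⟨T ↑nn, gkd.invN _ nn.2⟩
    rw [hπN_coe, hTz, map_add, h1, h2, zero_add]
  have hcomm2 : ∀ z : X, SN (πN z) = πN (T z) := by
    intro z
    refine Subtype.ext ?_
    rw [restrictCLM_coe, hcomm]
  -- iterate
  have hiter : ∀ n : ℕ, 1 ≤ n → (SN ^ n) (πN (u n)) = πN x := by
    intro n hn
    induction n with
    | zero => omega
    | succ n ih =>
      rcases Nat.eq_zero_or_pos n with rfl | hn1
      · rw [pow_one, hcomm2, hu1]
      · rw [pow_succ, ContinuousLinearMap.mul_apply, hcomm2, hurec n hn1]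
        exact ih hn1
  -- norm estimate
  have hq : IsQuasinilpotent SN := gkd.quasiN
  set δ' : ℝ := max δ 1 with hδ'
  have hδ'1 : (1:ℝ) ≤ δ' := le_max_right _ _
  have hδ'0 : (0:ℝ) < δ' := lt_of_lt_of_le one_pos hδ'1
  have hev := (geo_iff (fun n => norm_nonneg (SN ^ n))).mp hq ((2*δ')⁻¹) (by positivity)
  have hbound : ∀ᶠ n in atTop, ‖(πN x : N)‖ ≤ ‖πN‖ * ‖x‖ * (1/2 : ℝ)^n := by
    filter_upwards [hev, eventually_ge_atTop 1] with n hn hn1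
    have h3 : ‖(πN x : N)‖ ≤ ‖SN ^ n‖ * (‖πN‖ * (δ^n * ‖x‖)) := by
      rw [← hiter n hn1]
      calc ‖(SN ^ n) (πN (u n))‖ ≤ ‖SN ^ n‖ * ‖πN (u n)‖ := (SN ^ n).le_opNorm _
        _ ≤ ‖SN ^ n‖ * (‖πN‖ * ‖u n‖) := by
            exact mul_le_mul_of_nonneg_left (πN.le_opNorm _) (norm_nonneg (SN ^ n))
        _ ≤ ‖SN ^ n‖ * (‖πN‖ * (δ^n * ‖x‖)) := by
            exact mul_le_mul_of_nonneg_left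
              (mul_le_mul_of_nonneg_left (hub n hn1) (norm_nonneg πN)) (norm_nonneg (SN ^ n))
    refine le_trans h3 ?_
    have h4 : ‖SN ^ n‖ * (‖πN‖ * (δ^n * ‖x‖)) = (‖SN ^ n‖ * δ^n) * (‖πN‖ * ‖x‖) := by ring
    have h5 : ‖SN ^ n‖ * δ^n ≤ (1/2:ℝ)^n := by
      calc ‖SN ^ n‖ * δ^n ≤ ((2*δ')⁻¹)^n * δ'^n := by
            refine mul_le_mul hn (pow_le_pow_left₀ hδ.le (le_max_left _ _) n)
              (by positivity) (by positivity)
        _ = ((2*δ')⁻¹ * δ')^n := by rw [mul_pow]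
        _ ≤ (1/2:ℝ)^n := by
            refine pow_le_pow_left₀ (by positivity) ?_ n
            rw [mul_inv, mul_assoc, inv_mul_cancel₀ (ne_of_gt hδ'0)]
            norm_num
    rw [h4]
    refine le_trans (mul_le_mul_of_nonneg_right h5 (by positivity)) ?_
    ring_nf
    exact le_refl _
  have hlim : Tendsto (fun n : ℕ => ‖πN‖ * ‖x‖ * (1/2 : ℝ)^n) atTop (nhds 0) := by
    have := (tendsto_pow_atTop_nhds_zero_of_lt_one (show (0:ℝ) ≤ 1/2 by norm_num)
      (by norm_num)).const_mul (‖πN‖ * ‖x‖)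
    simpa using this
  have h0 : ‖(πN x : N)‖ ≤ 0 := ge_of_tendsto hlim hbound
  have hzero : (πN x : N) = 0 := by
    have := norm_le_zero_iff.mp h0
    exact this
  have hx2 : ((M.linearProjOfIsCompl N gkd.compl x : M) : X) +
      (N.linearProjOfIsCompl M gkd.compl.symm x : N) = x :=
    Submodule.projection_add_projection_eq_self gkd.compl x
  have h6 : ((N.linearProjOfIsCompl M gkd.compl.symm x : N) : X) = (0 : X) := by
    rw [← congrFun hπN_coe x, hzero]
    simp
  rw [h6, add_zero] at hx2
  rw [← hx2]
  exact (M.linearProjOfIsCompl N gkd.compl x).2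

theorem backward_dir (T : X →L[ℂ] X) (hg : HasGKD T)
    (hs : ∀ x : X, ∃ k ∈ analyticCore T, ∃ h ∈ quasinilpotentPart T, x = k + h) :
    RightGDInvertible T := by
  obtain ⟨M, N, gkd⟩ := hg
  haveI : CompleteSpace M := gkd.closedM.completeSpace_coe
  haveI : CompleteSpace N := gkd.closedN.completeSpace_coe
  set SM := restrictCLM T M gkd.invM with hSM
  have hsr : SemiRegular SM := gkd.semiregM
  obtain ⟨c, hc1, hc⟩ := semireg_const hsr
  have hc0 : (0:ℝ) < c := lt_of_lt_of_le one_pos hc1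
  -- quasinilpotent-part elements of M lie in the analytic core
  have hH0M : ∀ z : M, (z : X) ∈ quasinilpotentPart T → (z : X) ∈ analyticCore T := by
    intro z hz
    have hz2 : ∀ n : ℕ, ∃ w : M, (SM ^ n) w = z := by
      have hcl := sinf_closed hsr
      obtain ⟨k, hk0, hkb⟩ :
          ∃ k : ℕ → M, (∀ n, (SM ^ n) (k n) = 0) ∧
            ∀ n, ‖z - k n‖ ≤ c ^ n * ‖(SM ^ n) z‖ := by
        have hkd := kerdist hsr hc1 hc
        choose k h1 h2 using fun n => hkd n z
        exact ⟨k, h1, h2⟩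
      have hkmem : ∀ n, k n ∈ {y : M | ∀ m : ℕ, ∃ w, (SM ^ m) w = y} :=
        fun n m => ker_pow_mem_range_pow hsr m n (k n) (hk0 n)
      have hnorm : ∀ n, ‖(SM ^ n) z‖ = ‖(T ^ n) (z : X)‖ := by
        intro n
        rw [Submodule.coe_norm, restrictCLM_pow_coe]
      have hev := (geo_iff (fun n => norm_nonneg ((T ^ n) (z : X)))).mp hz ((2*c)⁻¹)
        (by positivity)
      have hlim : Tendsto k atTop (nhds z) := by
        have hd : Tendsto (fun n => ‖k n - z‖) atTop (nhds 0) := by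
          refine squeeze_zero' (Eventually.of_forall fun n => norm_nonneg _) ?_
            (tendsto_pow_atTop_nhds_zero_of_lt_one (show (0:ℝ) ≤ 1/2 by norm_num)
              (by norm_num))
          filter_upwards [hev] with n hn
          rw [norm_sub_rev]
          calc ‖z - k n‖ ≤ c ^ n * ‖(SM ^ n) z‖ := hkb n
            _ ≤ c ^ n * ((2*c)⁻¹) ^ n := by
                rw [hnorm n]
                exact mul_le_mul_of_nonneg_left hn (by positivity)
            _ = (c * (2*c)⁻¹) ^ n := by rw [mul_pow]
            _ = (1/2 : ℝ)^n := by
                congr 1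
                rw [mul_inv, ← mul_assoc, mul_comm c 2⁻¹, mul_assoc,
                  mul_inv_cancel₀ (ne_of_gt hc0)]
                norm_num
        rwa [← tendsto_iff_norm_sub_tendsto_zero] at hd
      exact hcl.mem_of_tendsto hlim (Eventually.of_forall hkmem)
    obtain ⟨u, hu0, hurec, hub⟩ := sinf_orbit hsr hc1 hc z hz2
    refine ⟨fun n => (u n : X), c, hc0, ?_, fun n _ => ?_, fun n _ => ?_⟩
    · rw [← restrictCLM_coe T M gkd.invM, ← hSM, hurec 0, hu0]
    · rw [← restrictCLM_coe T M gkd.invM, ← hSM, hurec n]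
    · rw [← Submodule.coe_norm]
      calc ‖u n‖ ≤ c ^ n * ‖z‖ := hub n
        _ = c ^ n * ‖(z : X)‖ := by rw [Submodule.coe_norm]
  -- the analytic core equals M
  have hMcore : (M : Set X) ⊆ analyticCore T := by
    intro x hxM
    obtain ⟨k, hk, h', hh', heq⟩ := hs x
    have hkM : k ∈ M := core_subset_M T gkd hk
    have hhM : h' ∈ M := by
      have : h' = x - k := by rw [heq]; abel
      rw [this]
      exact sub_mem hxM hkM
    have hh'core : h' ∈ analyticCore T := hH0M ⟨h', hhM⟩ hh'
    rw [heq]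
    exact add_mem_analyticCore T hk hh'core
  have hEq : analyticCore T = (M : Set X) := subset_antisymm (core_subset_M T gkd) hMcore
  refine ⟨hEq ▸ gkd.closedM, N, gkd.closedN, gkd.invN,
    subset_quasinilpotentPart T N gkd.invN gkd.quasiN, ?_, ?_⟩
  · rw [hEq]
    ext w
    simp only [Set.mem_inter_iff, Set.mem_singleton_iff]
    constructor
    · rintro ⟨hwM, hwN⟩
      exact (Submodule.disjoint_def.mp gkd.compl.disjoint) w hwM hwN
    · rintro rfl
      exact ⟨M.zero_mem, N.zero_mem⟩
  · intro x
    have hx : x ∈ M ⊔ N := by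
      rw [codisjoint_iff.mp gkd.compl.codisjoint]
      trivial
    obtain ⟨m, hm, n, hn, heq⟩ := Submodule.mem_sup.mp hx
    exact ⟨m, hEq ▸ hm, n, hn, heq.symm⟩

end Aux8
/-- `T` is right generalized Drazin invertible iff `T` admits a GKD
and `X = K(T) + H₀(T)`. -/
theorem right_gd_iff_gkd_core_add_h0 (T : X →L[ℂ] X) :
    RightGDInvertible T ↔
      HasGKD T ∧
        ∀ x : X, ∃ k ∈ analyticCore T, ∃ h ∈ quasinilpotentPart T, x = k + h := by
  constructor
  · exact forward_dir T
  · rintro ⟨hg, hs⟩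
    exact backward_dir T hg hs

end Paper
end

section
/- Let X be a complex Banach space and T a bounded linear operator on X. Then T is left generalized Drazin invertible if and only if there exists a bounded projection P on X (P² = P) such that TP = PT, T + P is bounded below, TP is quasinilpotent, and ran(P) = H₀(T). -/
open Filter Topology Set

namespace Paper

variable {Y : Type*} [NormedAddCommGroup Y] [NormedSpace ℂ Y]

variable {X : Type*} [NormedAddCommGroup X] [NormedSpace ℂ X] [CompleteSpace X]

section Aux

lemma tendsto_rpow_one_div_natCast' {C : ℝ} (hC : 0 < C) :
    Tendsto (fun n : ℕ => C ^ (1 / (n : ℝ))) atTop (nhds (1 : ℝ)) := by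
  have h1 : Tendsto (fun n : ℕ => 1 / (n : ℝ)) atTop (nhds 0) :=
    tendsto_one_div_atTop_nhds_zero_nat
  have h2 : Tendsto (fun y : ℝ => C ^ y) (nhds 0) (nhds 1) := by
    have := (Real.continuousAt_const_rpow (a := C) (b := 0) hC.ne')
    simpa [Real.rpow_zero] using this.tendsto
  exact h2.comp h1

lemma seq_rpow_iff (a : ℕ → ℝ) (ha : ∀ n, 0 ≤ a n) :
    Tendsto (fun n => a n ^ (1 / (n : ℝ))) atTop (nhds (0 : ℝ)) ↔
      ∀ ε > (0:ℝ), ∃ C : ℝ, 1 ≤ C ∧ ∀ n, a n ≤ C * ε ^ n := by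
  constructor
  · intro h ε hε
    have h2 : ∀ᶠ n in atTop, a n ^ (1 / (n:ℝ)) < ε := by
      have := h.eventually (eventually_lt_nhds hε)
      exact this
    rw [eventually_atTop] at h2
    obtain ⟨N, hN⟩ := h2
    set C : ℝ := 1 + ∑ k ∈ Finset.range (N+1), a k / ε ^ k with hCdef
    have hterms : ∀ k, 0 ≤ a k / ε ^ k := fun k => div_nonneg (ha k) (by positivity)
    have hsum : (0:ℝ) ≤ ∑ k ∈ Finset.range (N+1), a k / ε ^ k :=
      Finset.sum_nonneg fun k _ => hterms k
    refine ⟨C, by simp [hCdef]; linarith, fun n => ?_⟩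
    by_cases hn : n ≤ N
    · have hmem : n ∈ Finset.range (N+1) := Finset.mem_range.mpr (by omega)
      have h3 : a n / ε ^ n ≤ C := by
        have := Finset.single_le_sum (f := fun k => a k / ε ^ k)
          (fun k _ => hterms k) hmem
        simp only [hCdef]; linarith
      calc a n = (a n / ε ^ n) * ε ^ n := by field_simp
        _ ≤ C * ε ^ n := by
            exact mul_le_mul_of_nonneg_right h3 (by positivity)
    · push_neg at hn
      have hn1 : 1 ≤ n := by omega
      have hnpos : (0:ℝ) < (n:ℝ) := by exact_mod_cast hn1
      have h3 : a n ^ (1/(n:ℝ)) ≤ ε := (hN n (by omega)).le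
      have h4 : (a n ^ (1/(n:ℝ)))^n ≤ ε ^ n :=
        pow_le_pow_left₀ (Real.rpow_nonneg (ha n) _) h3 n
      have h5 : (a n ^ (1/(n:ℝ)))^n = a n := by
        rw [← Real.rpow_natCast (a n ^ (1/(n:ℝ))) n, ← Real.rpow_mul (ha n)]
        rw [one_div, inv_mul_cancel₀ hnpos.ne', Real.rpow_one]
      rw [h5] at h4
      have hC1 : 1 ≤ C := by simp [hCdef]; linarith
      calc a n ≤ ε ^ n := h4
        _ ≤ C * ε ^ n := le_mul_of_one_le_left (by positivity) hC1
  · intro h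
    rw [Metric.tendsto_atTop]
    intro ε hε
    obtain ⟨C, hC1, hC⟩ := h (ε/2) (by linarith)
    have hCpos : (0:ℝ) < C := lt_of_lt_of_le one_pos hC1
    have hC1n := tendsto_rpow_one_div_natCast' hCpos
    have h2 : ∀ᶠ n : ℕ in atTop, C ^ (1/(n:ℝ)) < 2 :=
      hC1n.eventually (eventually_lt_nhds one_lt_two)
    rw [eventually_atTop] at h2
    obtain ⟨N, hN⟩ := h2
    refine ⟨max N 1, fun n hn => ?_⟩
    have hn1 : 1 ≤ n := le_trans (le_max_right N 1) hn
    have hnN : N ≤ n := le_trans (le_max_left N 1) hn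
    have hnpos : (0:ℝ) < (n:ℝ) := by exact_mod_cast hn1
    have key : a n ^ (1/(n:ℝ)) ≤ C ^ (1/(n:ℝ)) * (ε/2) := by
      have h3 : a n ≤ C * (ε/2)^n := hC n
      have h4 : a n ^ (1/(n:ℝ)) ≤ (C * (ε/2)^n) ^ (1/(n:ℝ)) :=
        Real.rpow_le_rpow (ha n) h3 (by positivity)
      rw [Real.mul_rpow hCpos.le (by positivity)] at h4
      have h5 : ((ε/2)^n : ℝ) ^ (1/(n:ℝ)) = ε/2 := by
        rw [← Real.rpow_natCast (ε/2) n, ← Real.rpow_mul (by linarith)]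
        rw [mul_one_div, div_self hnpos.ne', Real.rpow_one]
      rw [h5] at h4
      exact h4
    have hlt : a n ^ (1/(n:ℝ)) < 2 * (ε/2) := by
      calc a n ^ (1/(n:ℝ)) ≤ C ^ (1/(n:ℝ)) * (ε/2) := key
        _ < 2 * (ε/2) := by
            have h6 := hN n hnN
            have h7 : (0:ℝ) < C ^ (1/(n:ℝ)) := Real.rpow_pos_of_pos hCpos _
            nlinarith
    rw [Real.dist_eq]
    have h0 : 0 ≤ a n ^ (1/(n:ℝ)) := Real.rpow_nonneg (ha n) _
    rw [abs_of_nonneg (by linarith)]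
    linarith

variable {X : Type*} [NormedAddCommGroup X] [NormedSpace ℂ X] [CompleteSpace X]

lemma mem_qp_iff (T : X →L[ℂ] X) (x : X) :
    x ∈ quasinilpotentPart T ↔
      ∀ ε > (0:ℝ), ∃ C : ℝ, 1 ≤ C ∧ ∀ n, ‖(T ^ n) x‖ ≤ C * ε ^ n :=
  seq_rpow_iff _ (fun _ => norm_nonneg _)

lemma isQuasinilpotent_iff (A : X →L[ℂ] X) :
    IsQuasinilpotent A ↔
      ∀ ε > (0:ℝ), ∃ C : ℝ, 1 ≤ C ∧ ∀ n, ‖A ^ n‖ ≤ C * ε ^ n :=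
  seq_rpow_iff _ (fun _ => norm_nonneg _)

/-- The quasinilpotent part as a submodule. -/
def qpSubmodule (T : X →L[ℂ] X) : Submodule ℂ X where
  carrier := quasinilpotentPart T
  zero_mem' := by
    rw [mem_qp_iff]
    intro ε hε
    exact ⟨1, le_refl 1, fun n => by simp [le_of_lt, pow_pos hε n, pow_nonneg hε.le]⟩
  add_mem' := by
    intro x y hx hy
    rw [mem_qp_iff] at hx hy ⊢
    intro ε hε
    obtain ⟨C₁, hC₁, h₁⟩ := hx ε hε
    obtain ⟨C₂, hC₂, h₂⟩ := hy ε hε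
    refine ⟨C₁ + C₂, by linarith, fun n => ?_⟩
    calc ‖(T^n) (x+y)‖ ≤ ‖(T^n) x‖ + ‖(T^n) y‖ := by
          rw [map_add]; exact norm_add_le _ _
      _ ≤ C₁ * ε^n + C₂ * ε^n := add_le_add (h₁ n) (h₂ n)
      _ = (C₁ + C₂) * ε^n := by ring
  smul_mem' := by
    intro c x hx
    rw [mem_qp_iff] at hx ⊢
    intro ε hε
    obtain ⟨C, hC1, h⟩ := hx ε hε
    refine ⟨(1 + ‖c‖) * C, ?_, fun n => ?_⟩
    · have : (0:ℝ) ≤ ‖c‖ := norm_nonneg c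
      nlinarith
    · calc ‖(T^n) (c • x)‖ = ‖c‖ * ‖(T^n) x‖ := by rw [map_smul, norm_smul]
        _ ≤ ‖c‖ * (C * ε^n) :=
            mul_le_mul_of_nonneg_left (h n) (norm_nonneg c)
        _ ≤ (1 + ‖c‖) * C * ε^n := by
            have h1 : (0:ℝ) ≤ ε^n := by positivity
            have h2 : (1:ℝ) ≤ C := hC1
            nlinarith [norm_nonneg c]

@[simp] lemma qpSubmodule_coe (T : X →L[ℂ] X) :
    (qpSubmodule T : Set X) = quasinilpotentPart T := rfl

lemma qp_T_invariant (T : X →L[ℂ] X) {x : X} (hx : x ∈ quasinilpotentPart T) :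
    T x ∈ quasinilpotentPart T := by
  rw [mem_qp_iff] at hx ⊢
  intro ε hε
  obtain ⟨C, hC1, h⟩ := hx ε hε
  refine ⟨C * (ε + 1), by nlinarith, fun n => ?_⟩
  have h1 : (T^n) (T x) = (T^(n+1)) x := by
    rw [pow_succ]; rfl
  rw [h1]
  calc ‖(T^(n+1)) x‖ ≤ C * ε^(n+1) := h (n+1)
    _ = C * ε * ε^n := by ring
    _ ≤ C * (ε+1) * ε^n := by nlinarith [pow_nonneg hε.le n]

/-- Banach–Steinhaus: pointwise quasinilpotency gives quasinilpotency. -/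
lemma quasinilpotent_of_pointwise (B : X →L[ℂ] X)
    (h : ∀ x : X, ∀ ε > (0:ℝ), ∃ C : ℝ, ∀ n, ‖(B ^ n) x‖ ≤ C * ε ^ n) :
    IsQuasinilpotent B := by
  rw [isQuasinilpotent_iff]
  intro ε hε
  have key : ∀ x : X, ∃ C : ℝ, ∀ n : ℕ, ‖(((ε⁻¹ : ℂ) • B) ^ n) x‖ ≤ C := by
    intro x
    obtain ⟨C, hC⟩ := h x ε hε
    refine ⟨max C 0, fun n => ?_⟩
    have h1 : ((ε⁻¹ : ℂ) • B) ^ n = (ε⁻¹ : ℂ)^n • B^n := by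
      rw [smul_pow]
    rw [h1]
    have h2 : ‖((ε⁻¹:ℂ)^n • B^n) x‖ = (ε⁻¹)^n * ‖(B^n) x‖ := by
      rw [ContinuousLinearMap.smul_apply, norm_smul, norm_pow, norm_inv,
        Complex.norm_real, Real.norm_eq_abs, abs_of_pos hε]
    rw [h2]
    have h3 : (ε⁻¹)^n * ‖(B^n) x‖ ≤ (ε⁻¹)^n * (C * ε^n) :=
      mul_le_mul_of_nonneg_left (hC n) (by positivity)
    have h4 : (ε⁻¹)^n * (C * ε^n) = C := by
      rw [← mul_assoc, mul_comm _ C, mul_assoc, ← mul_pow, inv_mul_cancel₀ hε.ne', one_pow, mul_one]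
    calc (ε⁻¹)^n * ‖(B^n) x‖ ≤ C := by rw [← h4]; exact h3
      _ ≤ max C 0 := le_max_left _ _
  obtain ⟨C', hC'⟩ := banach_steinhaus key
  refine ⟨max C' 1, le_max_right _ _, fun n => ?_⟩
  have h0 : ‖((ε⁻¹:ℂ) • B)^n‖ = (ε⁻¹)^n * ‖B^n‖ := by
    rw [smul_pow, norm_smul ((ε:ℂ)⁻¹ ^ n) (B ^ n), norm_pow, norm_inv, Complex.norm_real, Real.norm_eq_abs, abs_of_pos hε]
  have h1 : ‖B^n‖ = ε^n * ‖((ε⁻¹:ℂ) • B)^n‖ := by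
    rw [h0, ← mul_assoc, ← mul_pow, mul_inv_cancel₀ hε.ne', one_pow, one_mul]
  rw [h1]
  calc ε^n * ‖((ε⁻¹:ℂ)•B)^n‖ ≤ ε^n * C' :=
        mul_le_mul_of_nonneg_left (hC' n) (by positivity)
    _ ≤ max C' 1 * ε^n := by
        have : C' ≤ max C' 1 := le_max_left _ _
        nlinarith [pow_pos hε n]

end Aux

section Aux2
variable {X : Type*} [NormedAddCommGroup X] [NormedSpace ℂ X] [CompleteSpace X]

lemma eigen_neg_one_eq_zero (T : X →L[ℂ] X) {h : X}
    (hmem : h ∈ quasinilpotentPart T) (heq : T h = -h) : h = 0 := by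
  by_contra h0
  have hpos : 0 < ‖h‖ := norm_pos_iff.mpr h0
  have hiter0 : ∀ n : ℕ, (T ^ n) h = ((-1 : ℂ) ^ n) • h := by
    intro n
    induction n with
    | zero => simp
    | succ n ih =>
        have h1 : (T ^ (n+1)) h = T ((T ^ n) h) := by rw [pow_succ']; rfl
        rw [h1, ih, map_smul, heq, pow_succ]
        rw [mul_smul]
        simp
  have hiter : ∀ n : ℕ, ‖(T ^ n) h‖ = ‖h‖ := by
    intro n
    rw [hiter0 n, norm_smul, norm_pow]
    simp
  rw [mem_qp_iff] at hmem
  obtain ⟨C, hC1, hC⟩ := hmem (1/2) (by norm_num)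
  have htend : Tendsto (fun n : ℕ => C * (1/2 : ℝ)^n) atTop (nhds 0) := by
    have := tendsto_pow_atTop_nhds_zero_of_lt_one (by norm_num : (0:ℝ) ≤ 1/2)
      (by norm_num : (1/2:ℝ) < 1)
    simpa using this.const_mul C
  obtain ⟨n, hn⟩ := (htend.eventually (eventually_lt_nhds hpos)).exists
  have := hC n
  rw [hiter n] at this
  linarith

lemma ker_mem_qp (T : X →L[ℂ] X) {m : X} (hm : T m = 0) :
    m ∈ quasinilpotentPart T := by
  have hiter : ∀ n : ℕ, (T ^ (n+1)) m = 0 := by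
    intro n
    induction n with
    | zero => simpa using hm
    | succ n ih =>
        have h1 : (T ^ (n+2)) m = T ((T ^ (n+1)) m) := by rw [pow_succ']; rfl
        rw [h1, ih, map_zero]
  rw [mem_qp_iff]
  intro ε hε
  refine ⟨‖m‖ + 1, by linarith [norm_nonneg m], fun n => ?_⟩
  cases n with
  | zero =>
      simp only [pow_zero, ContinuousLinearMap.one_apply, one_mul]
      linarith [norm_nonneg m]
  | succ n =>
      rw [hiter n]
      simp
      positivity

lemma series_surj (T : X →L[ℂ] X) (N : Submodule ℂ X) (hNc : IsClosed (N : Set X))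
    (hNinv : ∀ x ∈ N, T x ∈ N) (hNqp : (N : Set X) ⊆ quasinilpotentPart T)
    {y : X} (hy : y ∈ N) : ∃ x ∈ N, T x + x = y := by
  have hyqp : y ∈ quasinilpotentPart T := hNqp hy
  rw [mem_qp_iff] at hyqp
  obtain ⟨C, hC1, hC⟩ := hyqp (1/2) (by norm_num)
  set b : ℕ → X := fun n => ((-1 : ℂ) ^ n) • (T ^ n) y with hb
  have hsum : Summable b := by
    apply Summable.of_norm_bounded (g := fun n => C * (1/2:ℝ)^n)
    · exact (summable_geometric_of_lt_one (by norm_num) (by norm_num)).mul_left C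
    · intro n
      have : ‖b n‖ = ‖(T ^ n) y‖ := by
        rw [hb]; simp [norm_smul]
      rw [this]; exact hC n
  set x := ∑' n, b n with hx
  have hTn_mem : ∀ n : ℕ, (T ^ n) y ∈ N := by
    intro n
    induction n with
    | zero => simpa using hy
    | succ n ih =>
        have h1 : (T ^ (n+1)) y = T ((T ^ n) y) := by rw [pow_succ']; rfl
        rw [h1]; exact hNinv _ ih
  have hbN : ∀ n, b n ∈ N := fun n => N.smul_mem _ (hTn_mem n)
  have hxN : x ∈ N := by
    have htend := hsum.hasSum.tendsto_sum_nat
    refine hNc.mem_of_tendsto htend ?_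
    filter_upwards with n
    exact N.sum_mem fun i _ => hbN i
  refine ⟨x, hxN, ?_⟩
  have hshift : Summable (fun n => b (n+1)) := (summable_nat_add_iff 1).mpr hsum
  have hTx : T x = -∑' n, b (n+1) := by
    rw [hx, ContinuousLinearMap.map_tsum T hsum, ← tsum_neg]
    congr 1
    funext n
    rw [hb]
    simp only [map_smul]
    have h1 : T ((T ^ n) y) = (T ^ (n+1)) y := by rw [pow_succ']; rfl
    rw [h1, pow_succ (-1 : ℂ) n, mul_smul]
    simp
  have hx0 : x = b 0 + ∑' n, b (n+1) := Summable.tsum_eq_zero_add hsum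
  have hb0 : b 0 = y := by simp [hb]
  rw [hTx, hx0, hb0]
  abel

end Aux2

/-- `T` is left generalized Drazin invertible iff there is a bounded
projection `P` commuting with `T` with `T + P` bounded below, `TP` quasinilpotent
and `ran P = H₀(T)`. -/
theorem left_gd_iff_projection (T : X →L[ℂ] X) :
    LeftGDInvertible T ↔
      ∃ P : X →L[ℂ] X, P * P = P ∧ T * P = P * T ∧ BoundedBelow (T + P) ∧
        IsQuasinilpotent (T * P) ∧ Set.range P = quasinilpotentPart T := by
  constructor
  · rintro ⟨hH0, M, hMc, hMinv, hTMc, hint, hspan⟩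
    set N := qpSubmodule T with hNdef
    have hNc : IsClosed (N : Set X) := hH0
    have hcompl : IsCompl M N := by
      constructor
      · rw [Submodule.disjoint_def]
        intro x hxM hxN
        have : x ∈ (M : Set X) ∩ quasinilpotentPart T := ⟨hxM, hxN⟩
        rw [hint] at this
        exact this
      · rw [codisjoint_iff, Submodule.eq_top_iff']
        intro x
        obtain ⟨m, hm, h, hh, hx⟩ := hspan x
        rw [Submodule.mem_sup]
        exact ⟨m, hm, h, hh, hx.symm⟩
    set Q : X →L[ℂ] N := N.linearProjOfClosedCompl M hcompl.symm hNc hMc with hQdef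
    set P : X →L[ℂ] X := N.subtypeL.comp Q with hPdef
    have hQcoe : ∀ x : X, (Q x : X) = (N.projectionOnto M hcompl.symm x : X) := by
      intro x
      rw [hQdef, Submodule.coe_continuous_linearProjOfClosedCompl']
    have hPq : ∀ x : X, P x ∈ quasinilpotentPart T := fun x => (Q x).2
    have hPid : ∀ h ∈ quasinilpotentPart T, P h = h := by
      intro h hh
      have : P h = ((N.projectionOnto M hcompl.symm) h : X) := hQcoe h
      rw [this]
      have := Submodule.linearProjOfIsCompl_apply_left hcompl.symm (⟨h, hh⟩ : N)
      rw [this]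
    have hP0 : ∀ m ∈ M, P m = 0 := by
      intro m hm
      have h1 : P m = ((N.projectionOnto M hcompl.symm) m : X) := hQcoe m
      rw [h1]
      have := Submodule.linearProjOfIsCompl_apply_right hcompl.symm (⟨m, hm⟩ : M)
      rw [this]
      rfl
    have hPx : ∀ (x m h : X), m ∈ M → h ∈ quasinilpotentPart T → x = m + h → P x = h := by
      intro x m h hm hh hx
      rw [hx, map_add, hP0 m hm, hPid h hh, zero_add]
    have hPP : P * P = P := by
      ext x
      exact hPid _ (hPq x)
    have hcomm : T * P = P * T := by
      ext x
      obtain ⟨m, hm, h, hh, hx⟩ := hspan x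
      have h1 : P x = h := hPx x m h hm hh hx
      have h2 : P (T x) = T h := by
        refine hPx (T x) (T m) (T h) (hMinv m hm) (qp_T_invariant T hh) ?_
        rw [hx, map_add]
      simp only [ContinuousLinearMap.mul_apply]
      rw [h1, h2]
    -- powers of T * P
    have hpow : ∀ n : ℕ, (T * P) ^ (n + 1) = T ^ (n + 1) * P := by
      intro n
      induction n with
      | zero => simp
      | succ n ih =>
          have : (T * P) ^ (n + 2) = (T * P) ^ (n + 1) * (T * P) := by rw [pow_succ]
          rw [this, ih, mul_assoc, ← mul_assoc P T P, ← hcomm, mul_assoc T P P,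
            hPP, ← mul_assoc, ← pow_succ]
    refine ⟨P, hPP, hcomm, ?_, ?_, ?_⟩
    · -- BoundedBelow (T + P)
      constructor
      · -- injective
        have hker : ∀ x : X, (T + P) x = 0 → x = 0 := by
          intro x hx0
          obtain ⟨m, hm, h, hh, hx⟩ := hspan x
          have hPxh : P x = h := hPx x m h hm hh hx
          have hsum : T m + (T h + h) = 0 := by
            have : (T + P) x = T x + P x := rfl
            rw [this, hPxh, hx, map_add] at hx0
            rw [← hx0]; abel
          have hTm_mem : T m ∈ (M : Set X) ∩ quasinilpotentPart T := by
            constructor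
            · exact hMinv m hm
            · have h1 : T m = -(T h + h) := eq_neg_of_add_eq_zero_left hsum
              rw [h1]
              exact N.neg_mem (N.add_mem (qp_T_invariant T hh) hh)
          rw [hint] at hTm_mem
          have hTm0 : T m = 0 := hTm_mem
          have hThh : T h + h = 0 := by
            rw [hTm0, zero_add] at hsum; exact hsum
          have hh0 : h = 0 := by
            exact eigen_neg_one_eq_zero T hh (eq_neg_of_add_eq_zero_left hThh)
          have hm_mem : m ∈ (M : Set X) ∩ quasinilpotentPart T :=
            ⟨hm, ker_mem_qp T hTm0⟩
          rw [hint] at hm_mem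
          have hm0 : m = 0 := hm_mem
          rw [hx, hm0, hh0, add_zero]
        intro a b hab
        have : (T + P) (a - b) = 0 := by
          rw [map_sub, hab, sub_self]
        have := hker _ this
        exact sub_eq_zero.mp this
      · -- closed range
        have hrange_eq : Set.range (T + P) =
            (fun x => x - P x) ⁻¹' (T '' (M : Set X)) := by
          ext x
          constructor
          · rintro ⟨z, rfl⟩
            obtain ⟨m, hm, h, hh, hz⟩ := hspan z
            have hPz : P z = h := hPx z m h hm hh hz
            have h1 : (T + P) z = T m + (T h + h) := by
              have : (T + P) z = T z + P z := rfl
              rw [this, hPz, hz, map_add]; abel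
            have h2 : P ((T + P) z) = T h + h := by
              refine hPx _ (T m) (T h + h) (hMinv m hm) ?_ h1
              exact N.add_mem (qp_T_invariant T hh) hh
            simp only [Set.mem_preimage]
            rw [h2, h1]
            have h3 : T m + (T h + h) - (T h + h) = T m := by abel
            rw [h3]
            exact ⟨m, hm, rfl⟩
          · intro hx
            simp only [Set.mem_preimage] at hx
            obtain ⟨m, hm, hTm⟩ := hx
            obtain ⟨w, hwN, hw⟩ := series_surj T N hNc
              (fun z hz => qp_T_invariant T hz) (fun z hz => hz) (hPq x)
            refine ⟨m + w, ?_⟩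
            calc (T + P) (m + w) = T m + (T w + w) := by
                  simp only [ContinuousLinearMap.add_apply, map_add,
                    hP0 m hm, hPid w hwN]
                  abel
              _ = x := by rw [hTm, hw]; abel
        rw [hrange_eq]
        have hcont : Continuous fun x : X => x - P x :=
          (continuous_id.sub P.continuous)
        exact hTMc.preimage hcont
    · -- quasinilpotent
      apply quasinilpotent_of_pointwise
      intro x ε hε
      have := (mem_qp_iff T (P x)).mp (hPq x) ε hε
      obtain ⟨C, hC1, hC⟩ := this
      refine ⟨C + ‖x‖, fun n => ?_⟩
      cases n with
      | zero =>
          simp only [pow_zero, ContinuousLinearMap.one_apply, one_mul]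
          linarith [norm_nonneg x]
      | succ n =>
          have h1 : ((T * P) ^ (n + 1)) x = (T ^ (n + 1)) (P x) := by
            rw [hpow n]; rfl
          rw [h1]
          calc ‖(T ^ (n+1)) (P x)‖ ≤ C * ε ^ (n+1) := hC (n+1)
            _ ≤ (C + ‖x‖) * ε ^ (n+1) := by
                have : (0:ℝ) ≤ ε ^ (n+1) := by positivity
                nlinarith [norm_nonneg x]
    · -- range P = qp
      ext x
      constructor
      · rintro ⟨z, rfl⟩; exact hPq z
      · intro hx; exact ⟨x, hPid x hx⟩
  · rintro ⟨P, hPP, hcomm, ⟨hinj, hclr⟩, hq, hrange⟩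
    have hPidem : ∀ x : X, P (P x) = P x := by
      intro x
      have := congrFun (congrArg (fun f : X →L[ℂ] X => ⇑f) hPP) x
      exact this
    have hqp_eq : quasinilpotentPart T =
        (⇑(ContinuousLinearMap.id ℂ X - P)) ⁻¹' {0} := by
      rw [← hrange]
      ext x
      simp only [Set.mem_preimage, Set.mem_singleton_iff,
        ContinuousLinearMap.sub_apply, ContinuousLinearMap.id_apply]
      constructor
      · rintro ⟨y, rfl⟩
        rw [hPidem y, sub_self]
      · intro hx
        exact ⟨x, (sub_eq_zero.mp hx).symm⟩
    have hH0c : IsClosed (quasinilpotentPart T) := by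
      rw [hqp_eq]
      exact isClosed_singleton.preimage (ContinuousLinearMap.id ℂ X - P).continuous
    refine ⟨hH0c, LinearMap.ker (P : X →ₗ[ℂ] X), ?_, ?_, ?_, ?_, ?_⟩
    · exact ContinuousLinearMap.isClosed_ker P
    · intro x hx
      rw [LinearMap.mem_ker, ContinuousLinearMap.coe_coe] at hx ⊢
      have : P (T x) = T (P x) := by
        have := congrFun (congrArg (fun f : X →L[ℂ] X => ⇑f) hcomm) x
        exact this.symm
      rw [this, hx, map_zero]
    · -- T '' ker P closed
      set R : Submodule ℂ X := LinearMap.range ((T + P : X →L[ℂ] X) : X →ₗ[ℂ] X) with hR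
      have hRc : IsClosed (R : Set X) := by
        have hRs : (R : Set X) = Set.range ⇑(T + P) := by
          ext z
          simp [hR, LinearMap.mem_range, Set.mem_range]
        rw [hRs]; exact hclr
      haveI : CompleteSpace R := hRc.completeSpace_coe
      set S : X →L[ℂ] R := (T + P).codRestrict R
        (fun z => LinearMap.mem_range_self _ z) with hS
      have hSval : ∀ z : X, ((S z : R) : X) = (T + P) z := fun z => rfl
      have hSker : LinearMap.ker (S : X →ₗ[ℂ] R) = ⊥ := by
        rw [Submodule.eq_bot_iff]
        intro a ha
        have h1 : S a = 0 := LinearMap.mem_ker.mp ha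
        apply hinj
        have h2 : ((S a : R) : X) = ((0 : R) : X) := congrArg _ h1
        rw [hSval] at h2
        rw [h2]
        simp
      have hSrange : LinearMap.range (S : X →ₗ[ℂ] R) = ⊤ := by
        rw [Submodule.eq_top_iff']
        rintro ⟨y, hy⟩
        obtain ⟨z, hz⟩ := hy
        exact LinearMap.mem_range.mpr ⟨z, Subtype.ext hz⟩
      set e := ContinuousLinearEquiv.ofBijective S hSker hSrange with he
      have hecoe : ∀ z : X, ((e z : R) : X) = (T + P) z := by
        intro z
        rw [he, ContinuousLinearEquiv.coeFn_ofBijective]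
        exact hSval z
      have himg : ⇑T '' ((LinearMap.ker (P : X →ₗ[ℂ] X) : Submodule ℂ X) : Set X) =
          Subtype.val '' (⇑e '' ((LinearMap.ker (P : X →ₗ[ℂ] X) : Submodule ℂ X) : Set X)) := by
        rw [Set.image_image]
        apply Set.image_congr
        intro z hz
        have hz0 : P z = 0 := hz
        rw [hecoe z]
        simp [ContinuousLinearMap.add_apply, hz0]
      rw [himg]
      have h1 : IsClosed (⇑e '' ((LinearMap.ker (P : X →ₗ[ℂ] X) : Submodule ℂ X) : Set X)) :=
        e.toHomeomorph.isClosedMap _ (ContinuousLinearMap.isClosed_ker P)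
      exact hRc.isClosedEmbedding_subtypeVal.isClosedMap _ h1
    · -- intersection
      ext x
      simp only [Set.mem_inter_iff, Set.mem_singleton_iff, SetLike.mem_coe,
        LinearMap.mem_ker, ContinuousLinearMap.coe_coe]
      constructor
      · rintro ⟨hx0, hxq⟩
        rw [← hrange] at hxq
        obtain ⟨y, rfl⟩ := hxq
        rw [hPidem y] at hx0
        exact hx0
      · rintro rfl
        exact ⟨map_zero P, by rw [← hrange]; exact ⟨0, map_zero P⟩⟩
    · intro x
      refine ⟨x - P x, ?_, P x, ?_, by abel⟩
      · rw [LinearMap.mem_ker, ContinuousLinearMap.coe_coe, map_sub, hPidem, sub_self]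
      · rw [← hrange]; exact ⟨x, rfl⟩

end Paper
end

section
/- Let X be a complex Banach space and T an invertible bounded linear operator on X with inverse T⁻¹. Then for every λ ∈ ℂ, λ ∈ σ_lgD(T) if and only if λ ≠ 0 and λ⁻¹ ∈ σ_lgD(T⁻¹). -/
open Filter Topology Set

namespace Paper

variable {Y : Type*} [NormedAddCommGroup Y] [NormedSpace ℂ Y]

variable {X : Type*} [NormedAddCommGroup X] [NormedSpace ℂ X] [CompleteSpace X]

lemma zero_mem_qnp (A : X →L[ℂ] X) : (0 : X) ∈ quasinilpotentPart A := by
  have h : ∀ᶠ n : ℕ in atTop, (0 : ℝ) = ‖(A ^ n) (0 : X)‖ ^ (1 / (n : ℝ)) := by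
    filter_upwards [eventually_ge_atTop 1] with n hn
    have hn0 : (n : ℝ) ≠ 0 := Nat.cast_ne_zero.mpr (by omega)
    rw [map_zero, norm_zero, Real.zero_rpow (one_div_ne_zero hn0)]
  exact Tendsto.congr' h tendsto_const_nhds

lemma qnp_mono (A B C : X →L[ℂ] X) (hB : B = C * A) (hc : C * A = A * C) :
    quasinilpotentPart A ⊆ quasinilpotentPart B := by
  intro x hx
  have hcom : Commute C A := hc
  have hg : Tendsto (fun n : ℕ => ‖C‖ * ‖(A ^ n) x‖ ^ (1 / (n : ℝ))) atTop (nhds 0) := by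
    simpa using hx.const_mul ‖C‖
  refine squeeze_zero' ?_ ?_ hg
  · filter_upwards with n
    exact Real.rpow_nonneg (norm_nonneg _) _
  · filter_upwards [eventually_ge_atTop 1] with n hn
    have hn0 : (n : ℝ) ≠ 0 := Nat.cast_ne_zero.mpr (by omega)
    have key : ‖(B ^ n) x‖ ≤ ‖C‖ ^ n * ‖(A ^ n) x‖ := by
      have hBn : B ^ n = C ^ n * A ^ n := by rw [hB, hcom.mul_pow]
      rw [hBn]
      calc ‖(C ^ n * A ^ n) x‖ = ‖(C ^ n) ((A ^ n) x)‖ := rfl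
        _ ≤ ‖C ^ n‖ * ‖(A ^ n) x‖ := (C ^ n).le_opNorm _
        _ ≤ ‖C‖ ^ n * ‖(A ^ n) x‖ := by
            gcongr
            exact norm_pow_le' C (by omega)
    calc ‖(B ^ n) x‖ ^ (1 / (n : ℝ))
        ≤ (‖C‖ ^ n * ‖(A ^ n) x‖) ^ (1 / (n : ℝ)) :=
          Real.rpow_le_rpow (norm_nonneg _) key (by positivity)
      _ = ‖C‖ * ‖(A ^ n) x‖ ^ (1 / (n : ℝ)) := by
          rw [Real.mul_rpow (by positivity) (norm_nonneg _), ← Real.rpow_natCast ‖C‖ n,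
            ← Real.rpow_mul (norm_nonneg _), mul_one_div, div_self hn0, Real.rpow_one]

lemma qnp_map (A D : X →L[ℂ] X) (hc : D * A = A * D) {x : X}
    (hx : x ∈ quasinilpotentPart A) : D x ∈ quasinilpotentPart A := by
  have hcom : Commute D A := hc
  have hkey : ∀ n : ℕ, (A ^ n) (D x) = D ((A ^ n) x) := by
    intro n
    have h := (hcom.pow_right n).symm
    calc (A ^ n) (D x) = (A ^ n * D) x := rfl
      _ = (D * A ^ n) x := by rw [h]
      _ = D ((A ^ n) x) := rfl
  set c : ℝ := max ‖D‖ 1 with hc_def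
  have hc1 : (1 : ℝ) ≤ c := le_max_right _ _
  have hg : Tendsto (fun n : ℕ => c * ‖(A ^ n) x‖ ^ (1 / (n : ℝ))) atTop (nhds 0) := by
    simpa using hx.const_mul c
  refine squeeze_zero' ?_ ?_ hg
  · filter_upwards with n
    exact Real.rpow_nonneg (norm_nonneg _) _
  · filter_upwards [eventually_ge_atTop 1] with n hn
    have hn0 : (n : ℝ) ≠ 0 := Nat.cast_ne_zero.mpr (by omega)
    have key : ‖(A ^ n) (D x)‖ ≤ c * ‖(A ^ n) x‖ := by
      rw [hkey n]
      calc ‖D ((A ^ n) x)‖ ≤ ‖D‖ * ‖(A ^ n) x‖ := D.le_opNorm _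
        _ ≤ c * ‖(A ^ n) x‖ := by gcongr; exact le_max_left _ _
    calc ‖(A ^ n) (D x)‖ ^ (1 / (n : ℝ))
        ≤ (c * ‖(A ^ n) x‖) ^ (1 / (n : ℝ)) :=
          Real.rpow_le_rpow (norm_nonneg _) key (by positivity)
      _ = c ^ (1 / (n : ℝ)) * ‖(A ^ n) x‖ ^ (1 / (n : ℝ)) :=
          Real.mul_rpow (by positivity) (norm_nonneg _)
      _ ≤ c * ‖(A ^ n) x‖ ^ (1 / (n : ℝ)) := by
          refine mul_le_mul_of_nonneg_right ?_ (Real.rpow_nonneg (norm_nonneg _) _)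
          calc c ^ (1 / (n : ℝ)) ≤ c ^ (1 : ℝ) := by
                apply Real.rpow_le_rpow_of_exponent_le hc1
                rw [div_le_one (by positivity)]
                exact_mod_cast hn
            _ = c := Real.rpow_one c

lemma eq_zero_of_mem_qnp_one {x : X}
    (hx : x ∈ quasinilpotentPart (1 : X →L[ℂ] X)) : x = 0 := by
  by_contra hx0
  have hnorm : 0 < ‖x‖ := norm_pos_iff.mpr hx0
  have h1 : Tendsto (fun n : ℕ => ‖x‖ ^ (1 / (n : ℝ))) atTop (nhds 0) := by
    refine hx.congr fun n => ?_
    simp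
  have hlb : min ‖x‖ 1 ≤ (0 : ℝ) := by
    refine ge_of_tendsto h1 ?_
    filter_upwards [eventually_ge_atTop 1] with n hn
    have hn1 : 1 / (n : ℝ) ≤ 1 := by
      rw [div_le_one (by positivity)]
      exact_mod_cast hn
    rcases le_total ‖x‖ 1 with h | h
    · calc min ‖x‖ 1 ≤ ‖x‖ := min_le_left _ _
        _ = ‖x‖ ^ (1 : ℝ) := (Real.rpow_one _).symm
        _ ≤ ‖x‖ ^ (1 / (n : ℝ)) := Real.rpow_le_rpow_of_exponent_ge hnorm h hn1
    · calc min ‖x‖ 1 ≤ 1 := min_le_right _ _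
        _ ≤ ‖x‖ ^ (1 / (n : ℝ)) := Real.one_le_rpow h (by positivity)
  have hpos : 0 < min ‖x‖ 1 := lt_min hnorm one_pos
  linarith

lemma isClosed_image_of_inv (E F : X →L[ℂ] X) (hEF : E * F = 1) (hFE : F * E = 1)
    {K : Set X} (hK : IsClosed K) : IsClosed (E '' K) := by
  have himg : E '' K = F ⁻¹' K := by
    ext y
    constructor
    · rintro ⟨k, hk, rfl⟩
      have hFEk : F (E k) = k := by
        have := congrArg (fun g : X →L[ℂ] X => g k) hFE
        simpa using this
      simpa [Set.mem_preimage, hFEk] using hk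
    · intro hy
      refine ⟨F y, hy, ?_⟩
      have := congrArg (fun g : X →L[ℂ] X => g y) hEF
      simpa using this
  rw [himg]
  exact hK.preimage F.continuous

lemma leftGDInvertible_of_inv (E F : X →L[ℂ] X) (hEF : E * F = 1) (hFE : F * E = 1) :
    LeftGDInvertible E := by
  have hq : quasinilpotentPart E = {0} := by
    apply Set.eq_singleton_iff_unique_mem.mpr
    refine ⟨zero_mem_qnp E, fun x hx => ?_⟩
    have hsub : quasinilpotentPart E ⊆ quasinilpotentPart (1 : X →L[ℂ] X) :=
      qnp_mono E 1 F hFE.symm (by rw [hFE, hEF])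
    exact eq_zero_of_mem_qnp_one (hsub hx)
  refine ⟨by rw [hq]; exact isClosed_singleton, ⊤, ?_, fun x _ => Submodule.mem_top, ?_, ?_, ?_⟩
  · rw [Submodule.top_coe]; exact isClosed_univ
  · exact isClosed_image_of_inv E F hEF hFE (by rw [Submodule.top_coe]; exact isClosed_univ)
  · rw [Submodule.top_coe, hq, Set.univ_inter]
  · intro x
    exact ⟨x, Submodule.mem_top, 0, zero_mem_qnp E, by simp⟩

lemma key_lemma (T S : X →L[ℂ] X) (h1 : T * S = 1) (h2 : S * T = 1)
    (l : ℂ) (hl : l ≠ 0)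
    (h : LeftGDInvertible (l • ContinuousLinearMap.id ℂ X - T)) :
    LeftGDInvertible (l⁻¹ • ContinuousLinearMap.id ℂ X - S) := by
  have hid : (ContinuousLinearMap.id ℂ X : X →L[ℂ] X) = 1 := rfl
  set A : X →L[ℂ] X := l • ContinuousLinearMap.id ℂ X - T with hA_def
  set B : X →L[ℂ] X := l⁻¹ • ContinuousLinearMap.id ℂ X - S with hB_def
  set C : X →L[ℂ] X := -(l⁻¹ • S) with hC_def
  set C' : X →L[ℂ] X := -(l • T) with hC'_def
  have hST : ∀ x, S (T x) = x := fun x => by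
    have := congrArg (fun g : X →L[ℂ] X => g x) h2; simpa using this
  have hTS : ∀ x, T (S x) = x := fun x => by
    have := congrArg (fun g : X →L[ℂ] X => g x) h1; simpa using this
  have hCA : C * A = B := by
    rw [hC_def, hA_def, hB_def]
    ext x
    simp only [ContinuousLinearMap.mul_apply, ContinuousLinearMap.sub_apply,
      ContinuousLinearMap.smul_apply, ContinuousLinearMap.neg_apply,
      ContinuousLinearMap.coe_id', id_eq, map_sub, map_smul, hST]
    match_scalars <;> field_simp
  have hAC : A * C = B := by
    rw [hC_def, hA_def, hB_def]
    ext x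
    simp only [ContinuousLinearMap.mul_apply, ContinuousLinearMap.sub_apply,
      ContinuousLinearMap.smul_apply, ContinuousLinearMap.neg_apply,
      ContinuousLinearMap.coe_id', id_eq, map_neg, map_smul, hTS]
    match_scalars <;> field_simp
  have hC'B : C' * B = A := by
    rw [hC'_def, hA_def, hB_def]
    ext x
    simp only [ContinuousLinearMap.mul_apply, ContinuousLinearMap.sub_apply,
      ContinuousLinearMap.smul_apply, ContinuousLinearMap.neg_apply,
      ContinuousLinearMap.coe_id', id_eq, map_sub, map_smul, hTS]
    match_scalars <;> field_simp
  have hBC' : B * C' = A := by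
    rw [hC'_def, hA_def, hB_def]
    ext x
    simp only [ContinuousLinearMap.mul_apply, ContinuousLinearMap.sub_apply,
      ContinuousLinearMap.smul_apply, ContinuousLinearMap.neg_apply,
      ContinuousLinearMap.coe_id', id_eq, map_neg, map_smul, hST]
    match_scalars <;> field_simp
  have hCC' : C * C' = 1 := by
    rw [hC_def, hC'_def]
    ext x
    simp only [ContinuousLinearMap.mul_apply, ContinuousLinearMap.neg_apply,
      ContinuousLinearMap.smul_apply, ContinuousLinearMap.one_apply, map_neg, map_smul, hST]
    match_scalars <;> field_simp
  have hC'C : C' * C = 1 := by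
    rw [hC_def, hC'_def]
    ext x
    simp only [ContinuousLinearMap.mul_apply, ContinuousLinearMap.neg_apply,
      ContinuousLinearMap.smul_apply, ContinuousLinearMap.one_apply, map_neg, map_smul, hTS]
    match_scalars <;> field_simp
  have hTA : T * A = A * T := by
    rw [hA_def]
    ext x
    simp only [ContinuousLinearMap.mul_apply, ContinuousLinearMap.sub_apply,
      ContinuousLinearMap.smul_apply, ContinuousLinearMap.coe_id', id_eq, map_sub, map_smul]
  have hQ : quasinilpotentPart B = quasinilpotentPart A :=
    Set.Subset.antisymm
      (qnp_mono B A C' hC'B.symm (by rw [hC'B, hBC']))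
      (qnp_mono A B C hCA.symm (by rw [hCA, hAC]))
  obtain ⟨hH, M, hMcl, hMinv, hAMcl, hint, hsum⟩ := h
  have hSM : ∀ x ∈ M, S x ∈ M := by
    intro x hxM
    obtain ⟨m, hm, hh, hhq, hx⟩ := hsum (S x)
    have hTS : T (S x) = x := by
      have := congrArg (fun g : X →L[ℂ] X => g x) h1
      simpa using this
    have hTm : T m ∈ M := by
      have hAm := hMinv m hm
      have heq : T m = l • m - A m := by
        rw [hA_def]; simp
      rw [heq]
      exact M.sub_mem (M.smul_mem _ hm) hAm
    have hxeq : x = T m + T hh := by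
      rw [← hTS, hx, map_add]
    have hThM : T hh ∈ (M : Set X) ∩ quasinilpotentPart A := by
      constructor
      · have : T hh = x - T m := by rw [hxeq]; abel
        rw [this]
        exact M.sub_mem hxM hTm
      · exact qnp_map A T hTA hhq
    rw [hint, Set.mem_singleton_iff] at hThM
    have hh0 : hh = 0 := by
      have := congrArg (fun g : X →L[ℂ] X => g hh) h2
      simp only [ContinuousLinearMap.mul_apply, ContinuousLinearMap.one_apply] at this
      rw [← this, hThM, map_zero]
    rw [hx, hh0, add_zero]
    exact hm
  refine ⟨by rw [hQ]; exact hH, M, hMcl, ?_, ?_, ?_, ?_⟩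
  · intro x hxM
    have : B x = l⁻¹ • x - S x := by rw [hB_def]; simp
    show B x ∈ M
    rw [this]
    exact M.sub_mem (M.smul_mem _ hxM) (hSM x hxM)
  · show IsClosed (B '' (M : Set X))
    have : B '' (M : Set X) = C '' (A '' (M : Set X)) := by
      rw [← Set.image_comp]
      apply Set.image_congr
      intro a _
      show B a = C (A a)
      rw [← hCA]; rfl
    rw [this]
    exact isClosed_image_of_inv C C' hCC' hC'C hAMcl
  · show (M : Set X) ∩ quasinilpotentPart B = {0}
    rw [hQ]; exact hint
  · intro x
    obtain ⟨m, hm, hh, hhq, hx⟩ := hsum x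
    exact ⟨m, hm, hh, by rw [hQ]; exact hhq, hx⟩

/-- for invertible `T` with inverse `S`, `λ ∈ σ_lgD(T)` iff `λ ≠ 0`
and `λ⁻¹ ∈ σ_lgD(T⁻¹)`. -/
theorem sigmaLgD_inverse (T S : X →L[ℂ] X) (h1 : T * S = 1) (h2 : S * T = 1)
    (l : ℂ) :
    l ∈ sigmaLgD T ↔ l ≠ 0 ∧ l⁻¹ ∈ sigmaLgD S := by
  constructor
  · intro hT
    have hT' : ¬ LeftGDInvertible (l • ContinuousLinearMap.id ℂ X - T) := hT
    have hl : l ≠ 0 := by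
      rintro rfl
      apply hT'
      have heq : (0 : ℂ) • ContinuousLinearMap.id ℂ X - T = -T := by simp
      rw [heq]
      exact leftGDInvertible_of_inv (-T) (-S) (by simp [h1]) (by simp [h2])
    refine ⟨hl, ?_⟩
    show ¬ LeftGDInvertible (l⁻¹ • ContinuousLinearMap.id ℂ X - S)
    intro hS
    apply hT'
    have := key_lemma S T h2 h1 l⁻¹ (inv_ne_zero hl) hS
    rwa [inv_inv] at this
  · rintro ⟨hl, hS⟩
    show ¬ LeftGDInvertible (l • ContinuousLinearMap.id ℂ X - T)
    intro hT
    exact hS (key_lemma T S h1 h2 l hl hT)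

end Paper
end
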